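/- arXiv:2404.01001 — 2 statements merged into one kernel-verified Lean document; each statement's English description precedes it below -/
import Mathlib

section
/- For every n ≥ 4 and every i, the reduced simplicial homology groups satisfy H̃_i(Δ_n; K) ≅ H̃_{i-1}(Δ_{n-3}; K), where Δ_n is the clique complex of the complement of the path P_n. -/
open Finset

attribute [local instance] Classical.propDecidable

variable (K : Type) [Field K]

/-- Quotient of the submodule `A` by (the pullback of) the submodule `B`. -/
noncomputable def quotMod {M : Type} [AddCommGroup M] [Module K M] (A B : Submodule K M) :
    Type :=
  ↥A ⧸ Submodule.comap A.subtype B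

noncomputable instance {M : Type} [AddCommGroup M] [Module K M] (A B : Submodule K M) :
    AddCommGroup (quotMod K A B) :=
  inferInstanceAs (AddCommGroup (↥A ⧸ Submodule.comap A.subtype B))

noncomputable instance {M : Type} [AddCommGroup M] [Module K M] (A B : Submodule K M) :
    Module K (quotMod K A B) :=
  inferInstanceAs (Module K (↥A ⧸ Submodule.comap A.subtype B))

variable {n : ℕ}

/-- The simplicial boundary operator on the total chain module spanned by all
subsets of `Fin n` (the empty set accounting for the augmentation). -/
noncomputable def bdry : ((Finset (Fin n)) →₀ K) →ₗ[K] ((Finset (Fin n)) →₀ K) :=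
  Finsupp.lsum K fun s => LinearMap.toSpanSingleton K _
    (∑ v ∈ s, ((-1 : K) ^ (s.filter (· < v)).card) • Finsupp.single (s.erase v) (1 : K))

/-- The subspace of chains of the complex `Δ` spanned by faces of cardinality `c`. -/
noncomputable def degSub (Δ : Finset (Finset (Fin n))) (c : ℕ) :
    Submodule K ((Finset (Fin n)) →₀ K) :=
  Submodule.span K {x | ∃ s ∈ Δ, s.card = c ∧ x = Finsupp.single s (1 : K)}

/-- Reduced homology of `Δ` at chain level `c`, that is, `H̃_{c-1}(Δ; K)`:
cycles supported in faces of cardinality `c` modulo boundaries of chains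
supported in faces of cardinality `c + 1`. -/
noncomputable def homologyLevel (Δ : Finset (Finset (Fin n))) (c : ℕ) : Type :=
  quotMod K (degSub K Δ c ⊓ LinearMap.ker (bdry K))
    (Submodule.map (bdry K) (degSub K Δ (c + 1)))

noncomputable instance (Δ : Finset (Finset (Fin n))) (c : ℕ) :
    AddCommGroup (homologyLevel K Δ c) :=
  inferInstanceAs (AddCommGroup (quotMod K _ _))

noncomputable instance (Δ : Finset (Finset (Fin n))) (c : ℕ) :
    Module K (homologyLevel K Δ c) :=
  inferInstanceAs (Module K (quotMod K _ _))

/-- The `i`-th reduced simplicial homology `H̃_i(Δ; K)`. -/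
noncomputable def reducedHomology (Δ : Finset (Finset (Fin n))) (i : ℕ) : Type :=
  homologyLevel K Δ (i + 1)

noncomputable instance (Δ : Finset (Finset (Fin n))) (i : ℕ) :
    AddCommGroup (reducedHomology K Δ i) :=
  inferInstanceAs (AddCommGroup (homologyLevel K Δ (i + 1)))

noncomputable instance (Δ : Finset (Finset (Fin n))) (i : ℕ) :
    Module K (reducedHomology K Δ i) :=
  inferInstanceAs (Module K (homologyLevel K Δ (i + 1)))

/-- The independence complex of `G`, i.e. the clique complex of `Gᶜ`. -/
noncomputable def indepCx (G : SimpleGraph (Fin n)) : Finset (Finset (Fin n)) :=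
  Finset.univ.powerset.filter fun s => ∀ i ∈ s, ∀ j ∈ s, ¬ G.Adj i j

/-- The link of a face `F` in the complex `Δ`. -/
noncomputable def linkCx (Δ : Finset (Finset (Fin n))) (F : Finset (Fin n)) :
    Finset (Finset (Fin n)) :=
  Finset.univ.powerset.filter fun s => Disjoint s F ∧ s ∪ F ∈ Δ

/-- The graded Betti number `β_{i,d}` of the vertex cover ideal `J(G)`, expressed via
Hochster's formula: `β_{i,d}(J(G)) = Σ_{F ∈ Δ(Gᶜ), |F| = n - d} dim H̃_{i-1}(link F)`. -/
noncomputable def coverBetti (G : SimpleGraph (Fin n)) (i d : ℕ) : ℕ :=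
  ∑ F ∈ (indepCx G).filter (fun F => F.card + d = n),
    Module.finrank K (homologyLevel K (linkCx (indepCx G) F) i)

/-- The projective dimension of the vertex cover ideal `J(G)`. -/
noncomputable def projdimJ (G : SimpleGraph (Fin n)) : ℕ :=
  sSup {i | ∃ d, coverBetti K G i d ≠ 0}

/-- The Castelnuovo–Mumford regularity of the vertex cover ideal `J(G)`. -/
noncomputable def regJ (G : SimpleGraph (Fin n)) : ℕ :=
  sSup {j | ∃ i, coverBetti K G i (i + j) ≠ 0}

set_option maxRecDepth 40000

namespace HomAux

variable {K : Type} [Field K] {α β : Type}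

noncomputable def onB (g : α → (β →₀ K)) : (α →₀ K) →ₗ[K] (β →₀ K) :=
  Finsupp.lsum K fun s => LinearMap.toSpanSingleton K _ (g s)

@[simp] lemma onB_single (g : α → (β →₀ K)) (s : α) (b : K) :
    onB g (Finsupp.single s b) = b • g s := by
  simp [onB, Finsupp.lsum_single, LinearMap.toSpanSingleton_apply]

lemma onB_mem_supported {S : Set α} {T : Set β} (g : α → (β →₀ K))
    (hg : ∀ s ∈ S, g s ∈ Finsupp.supported K K T) {x}
    (hx : x ∈ Finsupp.supported K K S) : onB g x ∈ Finsupp.supported K K T := by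
  have hle : (Finsupp.supported K K S).map (onB g) ≤ Finsupp.supported K K T := by
    rw [Finsupp.supported_eq_span_single, Submodule.map_span, Submodule.span_le]
    rintro y ⟨x', ⟨a, ha, rfl⟩, rfl⟩
    simpa using Submodule.smul_mem _ (1:K) (hg a ha)
  exact hle ⟨x, hx, rfl⟩

lemma eq_on_supported {M : Type} [AddCommGroup M] [Module K M] {S : Set α}
    {f g : (α →₀ K) →ₗ[K] M}
    (h : ∀ s ∈ S, f (Finsupp.single s 1) = g (Finsupp.single s 1)) {x}
    (hx : x ∈ Finsupp.supported K K S) : f x = g x := by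
  rw [Finsupp.supported_eq_span_single] at hx
  have hle : Submodule.span K {f' | ∃ a ∈ S, Finsupp.single a (1:K) = f'} ≤
      LinearMap.eqLocus f g := by
    rw [Submodule.span_le]; rintro y ⟨a, ha, rfl⟩; exact h a ha
  exact hle hx

lemma supported_mono' {S T : Set α} (h : S ⊆ T) {x}
    (hx : x ∈ Finsupp.supported K K S) : x ∈ Finsupp.supported K K T :=
  Finsupp.supported_mono h hx


section Ops

noncomputable def bsum (s : Finset (Fin n)) : Finset (Fin n) →₀ K :=
  ∑ v ∈ s, ((-1 : K) ^ (s.filter (· < v)).card) • Finsupp.single (s.erase v) (1 : K)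

lemma bdry_eq : (bdry K : (Finset (Fin n) →₀ K) →ₗ[K] _) = onB (bsum (K := K)) := rfl

@[simp] lemma bdry_single (s : Finset (Fin n)) :
    bdry K (Finsupp.single s (1:K)) = bsum s := by
  rw [bdry_eq, onB_single, one_smul]

noncomputable def iV (x : Fin n) : (Finset (Fin n) →₀ K) →ₗ[K] (Finset (Fin n) →₀ K) :=
  onB fun s => Finsupp.single (insert x s) 1

@[simp] lemma iV_single (x : Fin n) (s : Finset (Fin n)) :
    iV (K := K) x (Finsupp.single s 1) = Finsupp.single (insert x s) 1 := by
  rw [iV, onB_single, one_smul]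

noncomputable def Dg : (Finset (Fin n) →₀ K) →ₗ[K] (Finset (Fin n) →₀ K) :=
  onB fun s => ((-1:K)^s.card) • Finsupp.single s 1

@[simp] lemma Dg_single (s : Finset (Fin n)) :
    Dg (K := K) (Finsupp.single s 1) = ((-1:K)^s.card) • Finsupp.single s 1 := by
  rw [Dg, onB_single, one_smul]

noncomputable def hW (w : Fin n) : (Finset (Fin n) →₀ K) →ₗ[K] (Finset (Fin n) →₀ K) :=
  onB fun s => if w ∈ s then 0 else ((-1:K)^s.card) • Finsupp.single (insert w s) (1:K)

noncomputable def rV (v : Fin n) : (Finset (Fin n) →₀ K) →ₗ[K] (Finset (Fin n) →₀ K) :=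
  onB fun s => if v ∈ s then Finsupp.single (s.erase v) (1:K) else 0

noncomputable def pV (v : Fin n) : (Finset (Fin n) →₀ K) →ₗ[K] (Finset (Fin n) →₀ K) :=
  onB fun s => if v ∈ s then 0 else Finsupp.single s (1:K)

noncomputable def eMb {m : ℕ} (h : m ≤ n) : (Finset (Fin m) →₀ K) →ₗ[K] (Finset (Fin n) →₀ K) :=
  onB fun s => Finsupp.single (s.map (Fin.castLEEmb h)) 1

@[simp] lemma eMb_single {m : ℕ} (h : m ≤ n) (s : Finset (Fin m)) :
    eMb (K := K) h (Finsupp.single s 1) =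
      Finsupp.single (s.map (Fin.castLEEmb h)) 1 := by
  rw [eMb, onB_single, one_smul]

def pmap {m : ℕ} (hm : 0 < m) (x : Fin n) : Fin m := ⟨min x.val (m-1), by omega⟩

lemma pmap_castLE {m : ℕ} (hm : 0 < m) (hmn : m ≤ n) (y : Fin m) :
    pmap hm (Fin.castLE hmn y) = y := by
  have := y.isLt
  simp only [pmap, Fin.ext_iff, Fin.coe_castLE]
  omega

lemma castLE_pmap {m : ℕ} (hm : 0 < m) (hmn : m ≤ n) {x : Fin n} (hx : (x:ℕ) < m) :
    Fin.castLE hmn (pmap hm x) = x := by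
  simp only [pmap, Fin.ext_iff, Fin.coe_castLE]
  omega

noncomputable def eRs {m : ℕ} (hm : 0 < m) : (Finset (Fin n) →₀ K) →ₗ[K] (Finset (Fin m) →₀ K) :=
  onB fun s => if ∀ x ∈ s, (x:ℕ) < m then Finsupp.single (s.image (pmap hm)) 1 else 0

lemma bsum_insert {x : Fin n} {s : Finset (Fin n)} (hx : x ∉ s) (hlt : ∀ y ∈ s, y < x) :
    (bsum (insert x s) : Finset (Fin n) →₀ K)
      = ((-1:K)^s.card) • Finsupp.single s 1 + iV x (bsum s) := by
  unfold bsum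
  rw [Finset.sum_insert hx]
  have h1 : (insert x s).filter (· < x) = s := by
    ext y
    simp only [Finset.mem_filter, Finset.mem_insert]
    constructor
    · rintro ⟨rfl | h, hy⟩
      · exact absurd hy (lt_irrefl _)
      · exact h
    · intro hy; exact ⟨Or.inr hy, hlt y hy⟩
  rw [h1, Finset.erase_insert hx]
  congr 1
  rw [map_sum]
  refine Finset.sum_congr rfl fun y hy => ?_
  have hyx : y ≠ x := fun h => hx (h ▸ hy)
  have h2 : (insert x s).filter (· < y) = s.filter (· < y) := by
    rw [Finset.filter_insert, if_neg (lt_asymm (hlt y hy))]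
  have h3 : (insert x s).erase y = insert x (s.erase y) :=
    Finset.erase_insert_of_ne hyx.symm
  rw [h2, h3, map_smul, iV_single]

end Ops


section Ops2

lemma single_eq_smul (s : α) (b : K) :
    (Finsupp.single s b : α →₀ K) = b • Finsupp.single s 1 := by
  rw [Finsupp.smul_single, smul_eq_mul, mul_one]

lemma lhom_ext1 {M : Type} [AddCommGroup M] [Module K M] {f g : (α →₀ K) →ₗ[K] M}
    (h : ∀ s, f (Finsupp.single s 1) = g (Finsupp.single s 1)) : f = g := by
  refine Finsupp.lhom_ext fun s b => ?_
  rw [single_eq_smul, map_smul, map_smul, h]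

@[simp] lemma hW_single_mem {w : Fin n} {s : Finset (Fin n)} (h : w ∈ s) :
    hW (K := K) w (Finsupp.single s 1) = 0 := by
  rw [hW, onB_single, if_pos h, smul_zero]

@[simp] lemma hW_single_not {w : Fin n} {s : Finset (Fin n)} (h : w ∉ s) :
    hW (K := K) w (Finsupp.single s 1)
      = ((-1:K)^s.card) • Finsupp.single (insert w s) 1 := by
  rw [hW, onB_single, if_neg h, one_smul]

@[simp] lemma rV_single_mem {v : Fin n} {s : Finset (Fin n)} (h : v ∈ s) :
    rV (K := K) v (Finsupp.single s 1) = Finsupp.single (s.erase v) 1 := by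
  rw [rV, onB_single, if_pos h, one_smul]

@[simp] lemma rV_single_not {v : Fin n} {s : Finset (Fin n)} (h : v ∉ s) :
    rV (K := K) v (Finsupp.single s 1) = 0 := by
  rw [rV, onB_single, if_neg h, smul_zero]

@[simp] lemma pV_single_mem {v : Fin n} {s : Finset (Fin n)} (h : v ∈ s) :
    pV (K := K) v (Finsupp.single s 1) = 0 := by
  rw [pV, onB_single, if_pos h, smul_zero]

@[simp] lemma pV_single_not {v : Fin n} {s : Finset (Fin n)} (h : v ∉ s) :
    pV (K := K) v (Finsupp.single s 1) = Finsupp.single s 1 := by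
  rw [pV, onB_single, if_neg h, one_smul]

lemma hW_homotopy {w : Fin n} (hw : ∀ y : Fin n, y ≤ w) :
    (bdry K).comp (hW (K := K) w) + (hW (K := K) w).comp (bdry K) = LinearMap.id := by
  refine lhom_ext1 fun s => ?_
  simp only [LinearMap.add_apply, LinearMap.comp_apply, LinearMap.id_apply]
  by_cases hws : w ∈ s
  · rw [hW_single_mem hws, map_zero, zero_add, bdry_single]
    unfold bsum
    rw [map_sum, Finset.sum_eq_single_of_mem w hws (fun y hy hyw => ?_)]
    · rw [map_smul, hW_single_not (Finset.notMem_erase w s), Finset.insert_erase hws]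
      have hfil : s.filter (· < w) = s.erase w := by
        ext y
        simp only [Finset.mem_filter, Finset.mem_erase]
        constructor
        · rintro ⟨hy, hlt⟩; exact ⟨ne_of_lt hlt, hy⟩
        · rintro ⟨hne, hy⟩; exact ⟨hy, lt_of_le_of_ne (hw y) hne⟩
      rw [hfil, smul_smul, ← pow_add, Even.neg_one_pow ⟨_, rfl⟩, one_smul]
    · rw [map_smul, hW_single_mem (Finset.mem_erase.mpr ⟨Ne.symm hyw, hws⟩), smul_zero]
  · rw [hW_single_not hws, map_smul, bdry_single, bdry_single,
      bsum_insert hws (fun y hy => lt_of_le_of_ne (hw y) (ne_of_mem_of_not_mem hy hws)),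
      smul_add, smul_smul, ← pow_add, Even.neg_one_pow ⟨_, rfl⟩, one_smul]
    have key : (hW (K := K) w) (bsum (K := K) s)
        = -(((-1:K)^s.card) • iV w (bsum (K := K) s)) := by
      unfold bsum
      rw [map_sum, map_sum, Finset.smul_sum, ← Finset.sum_neg_distrib]
      refine Finset.sum_congr rfl fun y hy => ?_
      have hwy : w ∉ s.erase y := fun h => hws (Finset.mem_of_mem_erase h)
      rw [map_smul, map_smul, hW_single_not hwy, iV_single, smul_smul, smul_smul, ← neg_smul]
      congr 1
      have hc : s.card = (s.erase y).card + 1 := (Finset.card_erase_add_one hy).symm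
      rw [hc, pow_succ]
      ring
    rw [key]
    abel

lemma iV_rV_pV (v : Fin n) :
    (iV (K := K) v).comp (rV (K := K) v) + pV (K := K) v = LinearMap.id := by
  refine lhom_ext1 fun s => ?_
  simp only [LinearMap.add_apply, LinearMap.comp_apply, LinearMap.id_apply]
  by_cases hv : v ∈ s
  · rw [rV_single_mem hv, pV_single_mem hv, iV_single, Finset.insert_erase hv, add_zero]
  · rw [rV_single_not hv, map_zero, pV_single_not hv, zero_add]

lemma bdry_iV {x : Fin n} {S : Set (Finset (Fin n))}
    (hS : ∀ s ∈ S, x ∉ s ∧ ∀ y ∈ s, y < x) {u : Finset (Fin n) →₀ K}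
    (hu : u ∈ Finsupp.supported K K S) :
    bdry K (iV x u) = Dg u + iV x (bdry K u) := by
  have h := eq_on_supported (f := (bdry K).comp (iV (K := K) x))
    (g := Dg + (iV (K := K) x).comp (bdry K)) (fun s hs => ?_) hu
  · simpa using h
  · obtain ⟨hxs, hlt⟩ := hS s hs
    simp only [LinearMap.comp_apply, LinearMap.add_apply]
    rw [iV_single, bdry_single, bsum_insert hxs hlt, Dg_single, bdry_single]

lemma rV_iV_same {v : Fin n} {u : Finset (Fin n) →₀ K}
    (hu : u ∈ Finsupp.supported K K {s : Finset (Fin n) | v ∉ s}) :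
    rV (K := K) v (iV v u) = u := by
  have h := eq_on_supported (f := (rV (K := K) v).comp (iV (K := K) v))
    (g := LinearMap.id) (fun s hs => ?_) hu
  · simpa using h
  · simp only [LinearMap.comp_apply, LinearMap.id_apply, iV_single]
    rw [rV_single_mem (Finset.mem_insert_self v s), Finset.erase_insert hs]

lemma rV_iV_ne {v x : Fin n} (hvx : v ≠ x) {u : Finset (Fin n) →₀ K}
    (hu : u ∈ Finsupp.supported K K {s : Finset (Fin n) | v ∉ s}) :
    rV (K := K) v (iV x u) = 0 := by
  have h := eq_on_supported (f := (rV (K := K) v).comp (iV (K := K) x))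
    (g := 0) (fun s hs => ?_) hu
  · simpa using h
  · simp only [LinearMap.comp_apply, LinearMap.zero_apply, iV_single]
    refine rV_single_not fun hmem => ?_
    rcases Finset.mem_insert.mp hmem with h' | h'
    · exact hvx h'
    · exact hs h'

lemma rV_zero_of {v : Fin n} {u : Finset (Fin n) →₀ K}
    (hu : u ∈ Finsupp.supported K K {s : Finset (Fin n) | v ∉ s}) :
    rV (K := K) v u = 0 := by
  have h := eq_on_supported (f := rV (K := K) v) (g := 0) (fun s hs => ?_) hu
  · simpa using h
  · simp only [LinearMap.zero_apply]
    exact rV_single_not hs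

lemma rV_bdry {v : Fin n} {u : Finset (Fin n) →₀ K}
    (hu : u ∈ Finsupp.supported K K {s : Finset (Fin n) | v ∉ s}) :
    rV (K := K) v (bdry K u) = 0 := by
  have h := eq_on_supported (f := (rV (K := K) v).comp (bdry K))
    (g := 0) (fun s hs => ?_) hu
  · simpa using h
  · simp only [LinearMap.comp_apply, LinearMap.zero_apply, bdry_single]
    unfold bsum
    rw [map_sum]
    refine Finset.sum_eq_zero fun y hy => ?_
    rw [map_smul, rV_single_not (fun h => hs (Finset.mem_of_mem_erase h)), smul_zero]

lemma rV_Dg {v : Fin n} {u : Finset (Fin n) →₀ K}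
    (hu : u ∈ Finsupp.supported K K {s : Finset (Fin n) | v ∉ s}) :
    rV (K := K) v (Dg u) = 0 := by
  have h := eq_on_supported (f := (rV (K := K) v).comp (Dg (K := K)))
    (g := 0) (fun s hs => ?_) hu
  · simpa using h
  · simp only [LinearMap.comp_apply, LinearMap.zero_apply, Dg_single]
    rw [map_smul, rV_single_not hs, smul_zero]

end Ops2


section Ops3

lemma bdry_supported {S T : Set (Finset (Fin n))} (h : ∀ s ∈ S, ∀ y ∈ s, s.erase y ∈ T)
    {u : Finset (Fin n) →₀ K} (hu : u ∈ Finsupp.supported K K S) :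
    bdry K u ∈ Finsupp.supported K K T := by
  rw [bdry_eq]
  refine onB_mem_supported _ (fun s hs => ?_) hu
  exact Submodule.sum_mem _ fun y hy =>
    Submodule.smul_mem _ _ (Finsupp.single_mem_supported K _ (h s hs y hy))

lemma iV_supported {x : Fin n} {S T : Set (Finset (Fin n))} (h : ∀ s ∈ S, insert x s ∈ T)
    {u : Finset (Fin n) →₀ K} (hu : u ∈ Finsupp.supported K K S) :
    iV (K := K) x u ∈ Finsupp.supported K K T := by
  rw [iV]
  exact onB_mem_supported _ (fun s hs => Finsupp.single_mem_supported K _ (h s hs)) hu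

lemma Dg_supported {S : Set (Finset (Fin n))}
    {u : Finset (Fin n) →₀ K} (hu : u ∈ Finsupp.supported K K S) :
    Dg (K := K) u ∈ Finsupp.supported K K S := by
  rw [Dg]
  exact onB_mem_supported _
    (fun s hs => Submodule.smul_mem _ _ (Finsupp.single_mem_supported K _ hs)) hu

lemma rV_supported {v : Fin n} {S T : Set (Finset (Fin n))}
    (h : ∀ s ∈ S, v ∈ s → s.erase v ∈ T)
    {u : Finset (Fin n) →₀ K} (hu : u ∈ Finsupp.supported K K S) :
    rV (K := K) v u ∈ Finsupp.supported K K T := by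
  rw [rV]
  refine onB_mem_supported _ (fun s hs => ?_) hu
  by_cases hv : v ∈ s
  · rw [if_pos hv]; exact Finsupp.single_mem_supported K _ (h s hs hv)
  · rw [if_neg hv]; exact Submodule.zero_mem _

lemma pV_supported {v : Fin n} {S T : Set (Finset (Fin n))}
    (h : ∀ s ∈ S, v ∉ s → s ∈ T)
    {u : Finset (Fin n) →₀ K} (hu : u ∈ Finsupp.supported K K S) :
    pV (K := K) v u ∈ Finsupp.supported K K T := by
  rw [pV]
  refine onB_mem_supported _ (fun s hs => ?_) hu
  by_cases hv : v ∈ s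
  · rw [if_pos hv]; exact Submodule.zero_mem _
  · rw [if_neg hv]; exact Finsupp.single_mem_supported K _ (h s hs hv)

lemma hW_supported {w : Fin n} {S T : Set (Finset (Fin n))}
    (h : ∀ s ∈ S, w ∉ s → insert w s ∈ T)
    {u : Finset (Fin n) →₀ K} (hu : u ∈ Finsupp.supported K K S) :
    hW (K := K) w u ∈ Finsupp.supported K K T := by
  rw [hW]
  refine onB_mem_supported _ (fun s hs => ?_) hu
  by_cases hv : w ∈ s
  · rw [if_pos hv]; exact Submodule.zero_mem _
  · rw [if_neg hv]
    exact Submodule.smul_mem _ _ (Finsupp.single_mem_supported K _ (h s hs hv))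

lemma eMb_supported {m : ℕ} (hmn : m ≤ n) {S : Set (Finset (Fin m))}
    {T : Set (Finset (Fin n))} (h : ∀ s ∈ S, s.map (Fin.castLEEmb hmn) ∈ T)
    {u : Finset (Fin m) →₀ K} (hu : u ∈ Finsupp.supported K K S) :
    eMb (K := K) hmn u ∈ Finsupp.supported K K T := by
  rw [eMb]
  exact onB_mem_supported _ (fun s hs => Finsupp.single_mem_supported K _ (h s hs)) hu

lemma eRs_supported {m : ℕ} (hm : 0 < m) {S : Set (Finset (Fin n))}
    {T : Set (Finset (Fin m))}
    (h : ∀ s ∈ S, (∀ x ∈ s, (x:ℕ) < m) → s.image (pmap hm) ∈ T)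
    {u : Finset (Fin n) →₀ K} (hu : u ∈ Finsupp.supported K K S) :
    eRs (K := K) hm u ∈ Finsupp.supported K K T := by
  rw [eRs]
  refine onB_mem_supported _ (fun s hs => ?_) hu
  by_cases hb : ∀ x ∈ s, (x:ℕ) < m
  · rw [if_pos hb]; exact Finsupp.single_mem_supported K _ (h s hs hb)
  · rw [if_neg hb]; exact Submodule.zero_mem _

@[simp] lemma eRs_single_of {m : ℕ} (hm : 0 < m) {s : Finset (Fin n)}
    (h : ∀ x ∈ s, (x:ℕ) < m) :
    eRs (K := K) hm (Finsupp.single s 1) = Finsupp.single (s.image (pmap hm)) 1 := by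
  rw [eRs, onB_single, if_pos h, one_smul]

lemma bdry_eMb {m : ℕ} (hmn : m ≤ n) :
    (bdry K).comp (eMb (K := K) hmn) = (eMb (K := K) hmn).comp (bdry K) := by
  refine lhom_ext1 fun s => ?_
  simp only [LinearMap.comp_apply, eMb_single, bdry_single]
  unfold bsum
  rw [Finset.sum_map, map_sum]
  refine Finset.sum_congr rfl fun y hy => ?_
  rw [map_smul, eMb_single]
  have herase : (s.map (Fin.castLEEmb hmn)).erase (Fin.castLEEmb hmn y)
      = (s.erase y).map (Fin.castLEEmb hmn) := (Finset.map_erase _ s y).symm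
  have hfil : (s.map (Fin.castLEEmb hmn)).filter (· < Fin.castLEEmb hmn y)
      = (s.filter (· < y)).map (Fin.castLEEmb hmn) := by
    ext a
    simp only [Finset.mem_filter, Finset.mem_map, Fin.castLEEmb_apply]
    constructor
    · rintro ⟨⟨x, hx, rfl⟩, hlt⟩
      refine ⟨x, ⟨hx, ?_⟩, rfl⟩
      rw [Fin.lt_def] at hlt ⊢
      simpa using hlt
    · rintro ⟨x, ⟨hx, hlt⟩, rfl⟩
      refine ⟨⟨x, hx, rfl⟩, ?_⟩
      rw [Fin.lt_def] at hlt ⊢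
      simpa using hlt
  rw [herase, hfil, Finset.card_map]

lemma eRs_eMb {m : ℕ} (hmn : m ≤ n) (hm : 0 < m) :
    (eRs (K := K) hm).comp (eMb (K := K) hmn) = LinearMap.id := by
  refine lhom_ext1 fun s => ?_
  simp only [LinearMap.comp_apply, LinearMap.id_apply, eMb_single]
  have hb : ∀ x ∈ s.map (Fin.castLEEmb hmn), (x:ℕ) < m := by
    intro x hx
    obtain ⟨y, _, rfl⟩ := Finset.mem_map.mp hx
    simpa using y.isLt
  rw [eRs_single_of hm hb]
  congr 1
  ext a
  simp only [Finset.mem_image, Finset.mem_map, Fin.castLEEmb_apply]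
  constructor
  · rintro ⟨x, ⟨y, hy, rfl⟩, rfl⟩
    rwa [pmap_castLE hm hmn]
  · intro ha
    exact ⟨Fin.castLE hmn a, ⟨a, ha, rfl⟩, pmap_castLE hm hmn a⟩

lemma eMb_eRs_single {m : ℕ} (hmn : m ≤ n) (hm : 0 < m) {s : Finset (Fin n)}
    (h : ∀ x ∈ s, (x:ℕ) < m) :
    eMb (K := K) hmn (eRs (K := K) hm (Finsupp.single s 1)) = Finsupp.single s 1 := by
  rw [eRs_single_of hm h, eMb_single]
  congr 1
  ext a
  simp only [Finset.mem_map, Finset.mem_image, Fin.castLEEmb_apply]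
  constructor
  · rintro ⟨x, ⟨y, hy, rfl⟩, rfl⟩
    rwa [castLE_pmap hm hmn (h y hy)]
  · intro ha
    exact ⟨pmap hm a, ⟨a, ha, rfl⟩, castLE_pmap hm hmn (h a ha)⟩

lemma eMb_eRs_on {m : ℕ} (hmn : m ≤ n) (hm : 0 < m) {u : Finset (Fin n) →₀ K}
    (hu : u ∈ Finsupp.supported K K {s : Finset (Fin n) | ∀ x ∈ s, (x:ℕ) < m}) :
    eMb (K := K) hmn (eRs (K := K) hm u) = u := by
  have h := eq_on_supported (f := (eMb (K := K) hmn).comp (eRs (K := K) hm))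
    (g := LinearMap.id) (fun s hs => ?_) hu
  · simpa using h
  · simp only [LinearMap.comp_apply, LinearMap.id_apply]
    exact eMb_eRs_single hmn hm hs

lemma eRs_bdry_on {m : ℕ} (hmn : m ≤ n) (hm : 0 < m) {u : Finset (Fin n) →₀ K}
    (hu : u ∈ Finsupp.supported K K {s : Finset (Fin n) | ∀ x ∈ s, (x:ℕ) < m}) :
    eRs (K := K) hm (bdry K u) = bdry K (eRs (K := K) hm u) := by
  have h := eq_on_supported (f := (eRs (K := K) hm).comp (bdry K))
    (g := (bdry K).comp (eRs (K := K) hm)) (fun s hs => ?_) hu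
  · simpa using h
  · simp only [LinearMap.comp_apply]
    set t := s.image (pmap hm) with ht
    have h1 : eMb (K := K) hmn (Finsupp.single t 1) = Finsupp.single s 1 := by
      have := eMb_eRs_single (K := K) hmn hm hs
      rwa [eRs_single_of hm hs] at this
    calc eRs (K := K) hm (bdry K (Finsupp.single s 1))
        = eRs (K := K) hm (bdry K (eMb (K := K) hmn (Finsupp.single t 1))) := by rw [h1]
      _ = eRs (K := K) hm (eMb (K := K) hmn (bdry K (Finsupp.single t 1))) := by
          rw [← LinearMap.comp_apply (bdry K) (eMb (K := K) hmn), bdry_eMb,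
            LinearMap.comp_apply]
      _ = bdry K (Finsupp.single t 1) := by
          rw [← LinearMap.comp_apply (eRs (K := K) hm) (eMb (K := K) hmn), eRs_eMb hmn hm,
            LinearMap.id_apply]
      _ = bdry K (eRs (K := K) hm (Finsupp.single s 1)) := by rw [eRs_single_of hm hs]

end Ops3


section Comb

open SimpleGraph

lemma mem_indepCx {G : SimpleGraph (Fin n)} {s : Finset (Fin n)} :
    s ∈ indepCx G ↔ ∀ i ∈ s, ∀ j ∈ s, ¬ G.Adj i j := by
  simp [indepCx]

lemma indepCx_down {G : SimpleGraph (Fin n)} {s t : Finset (Fin n)} (hts : t ⊆ s)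
    (hs : s ∈ indepCx G) : t ∈ indepCx G :=
  mem_indepCx.mpr fun i hi j hj => mem_indepCx.mp hs i (hts hi) j (hts hj)

lemma face_map {m : ℕ} (hmn : m ≤ n) {s : Finset (Fin m)}
    (hs : s ∈ indepCx (pathGraph m)) :
    s.map (Fin.castLEEmb hmn) ∈ indepCx (pathGraph n) := by
  rw [mem_indepCx] at hs ⊢
  intro i hi j hj hadj
  obtain ⟨i', hi', rfl⟩ := Finset.mem_map.mp hi
  obtain ⟨j', hj', rfl⟩ := Finset.mem_map.mp hj
  refine hs i' hi' j' hj' ?_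
  rw [pathGraph_adj] at hadj ⊢
  simpa using hadj

lemma face_insert_big (hn : 4 ≤ n) {t : Finset (Fin n)} (ht : t ∈ indepCx (pathGraph n))
    (hb : ∀ x ∈ t, (x:ℕ) < n - 3) {a : Fin n} (ha : n - 2 ≤ (a:ℕ)) :
    insert a t ∈ indepCx (pathGraph n) := by
  rw [mem_indepCx] at ht ⊢
  intro i hi j hj hadj
  rcases Finset.mem_insert.mp hi with rfl | hi'
  · rcases Finset.mem_insert.mp hj with rfl | hj'
    · exact (pathGraph n).irrefl hadj
    · have hjb := hb j hj'
      rw [pathGraph_adj] at hadj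
      omega
  · rcases Finset.mem_insert.mp hj with rfl | hj'
    · have hib := hb i hi'
      rw [pathGraph_adj] at hadj
      omega
    · exact ht i hi' j hj' hadj

lemma face_insert_last (hn : 4 ≤ n) {t : Finset (Fin n)} (ht : t ∈ indepCx (pathGraph n))
    (hv : ∀ x ∈ t, (x:ℕ) ≠ n - 2) {a : Fin n} (haval : (a:ℕ) = n - 1) :
    insert a t ∈ indepCx (pathGraph n) := by
  rw [mem_indepCx] at ht ⊢
  intro i hi j hj hadj
  rcases Finset.mem_insert.mp hi with rfl | hi'
  · rcases Finset.mem_insert.mp hj with rfl | hj'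
    · exact (pathGraph n).irrefl hadj
    · have hjb := hv j hj'
      have hjlt := j.isLt
      rw [pathGraph_adj] at hadj
      omega
  · rcases Finset.mem_insert.mp hj with rfl | hj'
    · have hib := hv i hi'
      have hilt := i.isLt
      rw [pathGraph_adj] at hadj
      omega
    · exact ht i hi' j hj' hadj

lemma face_bound (hn : 4 ≤ n) {s : Finset (Fin n)} (hs : s ∈ indepCx (pathGraph n))
    {a : Fin n} (haval : (a:ℕ) = n - 2) (ha : a ∈ s) :
    ∀ x ∈ s.erase a, (x:ℕ) < n - 3 := by
  intro x hx
  have hxa : x ≠ a := Finset.ne_of_mem_erase hx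
  have hxs : x ∈ s := Finset.mem_of_mem_erase hx
  have hnadj : ¬ (pathGraph n).Adj x a := mem_indepCx.mp hs x hxs a ha
  rw [pathGraph_adj] at hnadj
  have hxval : (x:ℕ) ≠ n - 2 := fun h => hxa (Fin.ext (h.trans haval.symm))
  have hxlt := x.isLt
  omega

lemma face_image (hn : 4 ≤ n) (hm : 0 < n - 3) {s : Finset (Fin n)}
    (hs : s ∈ indepCx (pathGraph n)) (hb : ∀ x ∈ s, (x:ℕ) < n - 3) :
    s.image (pmap hm) ∈ indepCx (pathGraph (n - 3)) := by
  rw [mem_indepCx] at hs ⊢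
  intro i hi j hj hadj
  obtain ⟨x, hx, rfl⟩ := Finset.mem_image.mp hi
  obtain ⟨y, hy, rfl⟩ := Finset.mem_image.mp hj
  refine hs x hx y hy ?_
  rw [pathGraph_adj] at hadj ⊢
  have h1 : ((pmap hm x : Fin (n-3)) : ℕ) = min x.val (n-3-1) := rfl
  have h2 : ((pmap hm y : Fin (n-3)) : ℕ) = min y.val (n-3-1) := rfl
  have := hb x hx
  have := hb y hy
  omega

lemma card_image_pmap (hm : 0 < n - 3) {s : Finset (Fin n)}
    (hb : ∀ x ∈ s, (x:ℕ) < n - 3) :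
    (s.image (pmap hm)).card = s.card := by
  refine Finset.card_image_of_injOn fun x hx y hy hxy => ?_
  have h1 : ((pmap hm x : Fin (n-3)) : ℕ) = min x.val (n-3-1) := rfl
  have h2 : ((pmap hm y : Fin (n-3)) : ℕ) = min y.val (n-3-1) := rfl
  have hx' := hb x hx
  have hy' := hb y hy
  have : ((pmap hm x : Fin (n-3)) : ℕ) = ((pmap hm y : Fin (n-3)) : ℕ) := by rw [hxy]
  exact Fin.ext (by omega)

end Comb

section Glue

lemma degSub_eq (Δ : Finset (Finset (Fin n))) (c : ℕ) :
    degSub K Δ c = Finsupp.supported K K {s : Finset (Fin n) | s ∈ Δ ∧ s.card = c} := by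
  rw [Finsupp.supported_eq_span_single, degSub]
  congr 1
  ext x
  constructor
  · rintro ⟨s, hs, hc, rfl⟩
    exact ⟨s, ⟨hs, hc⟩, rfl⟩
  · rintro ⟨s, ⟨hs, hc⟩, rfl⟩
    exact ⟨s, hs, hc, rfl⟩

variable (K) in
lemma quot_equiv {M N : Type} [AddCommGroup M] [Module K M] [AddCommGroup N] [Module K N]
    (A₁ B₁ : Submodule K M) (A₂ B₂ : Submodule K N) (Φ : M →ₗ[K] N)
    (hZ : ∀ z ∈ A₁, Φ z ∈ A₂)
    (hB : ∀ z ∈ A₁, (Φ z ∈ B₂ ↔ z ∈ B₁))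
    (hs : ∀ ζ ∈ A₂, ∃ z ∈ A₁, ζ - Φ z ∈ B₂) :
    Nonempty (quotMod K A₁ B₁ ≃ₗ[K] quotMod K A₂ B₂) := by
  let Φ' : A₁ →ₗ[K] A₂ := Φ.restrict hZ
  let f : A₁ →ₗ[K] (↥A₂ ⧸ Submodule.comap A₂.subtype B₂) :=
    (Submodule.mkQ _).comp Φ'
  have hker : LinearMap.ker f = Submodule.comap A₁.subtype B₁ := by
    ext z
    simp only [LinearMap.mem_ker, LinearMap.comp_apply, Submodule.mkQ_apply, f,
      Submodule.Quotient.mk_eq_zero, Submodule.mem_comap]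
    exact hB z z.2
  let g : (↥A₁ ⧸ Submodule.comap A₁.subtype B₁) →ₗ[K] (↥A₂ ⧸ Submodule.comap A₂.subtype B₂) :=
    Submodule.liftQ _ f hker.ge
  have hinj : Function.Injective g := by
    rw [← LinearMap.ker_eq_bot]
    exact Submodule.ker_liftQ_eq_bot _ _ _ hker.le
  have hsur : Function.Surjective g := by
    intro y
    obtain ⟨ζ, rfl⟩ := Submodule.mkQ_surjective _ y
    obtain ⟨z, hz, hzB⟩ := hs ζ ζ.2
    refine ⟨Submodule.Quotient.mk ⟨z, hz⟩, ?_⟩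
    have heq : Submodule.Quotient.mk (p := Submodule.comap A₂.subtype B₂) (Φ' ⟨z, hz⟩)
        = Submodule.Quotient.mk ζ := by
      rw [Submodule.Quotient.eq]
      have : ((Φ' ⟨z, hz⟩ - ζ : A₂) : N) = -(ζ - Φ z) := by
        simp [Φ', LinearMap.restrict_apply]
      rw [Submodule.mem_comap]
      rw [show (A₂.subtype (Φ' ⟨z, hz⟩ - ζ)) = -(ζ - Φ z) from this]
      exact neg_mem hzB
    simpa [g, f] using heq
  exact ⟨LinearEquiv.ofBijective g ⟨hinj, hsur⟩⟩

end Glue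


section Key

open SimpleGraph

variable (K) in
lemma key (hn : 4 ≤ n) (c : ℕ) :
    Nonempty (homologyLevel K (indepCx (pathGraph (n-3))) c ≃ₗ[K]
      homologyLevel K (indepCx (pathGraph n)) (c+1)) := by
  have hmn : n - 3 ≤ n := by omega
  have hm : 0 < n - 3 := by omega
  set Δ : Finset (Finset (Fin n)) := indepCx (pathGraph n) with hΔ
  set Λ : Finset (Finset (Fin (n-3))) := indepCx (pathGraph (n-3)) with hΛ
  let v : Fin n := ⟨n-2, by omega⟩
  let w : Fin n := ⟨n-1, by omega⟩
  have hvval : (v:ℕ) = n-2 := rfl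
  have hwval : (w:ℕ) = n-1 := rfl
  have hvw : v ≠ w := by
    intro h
    have h2 : n - 2 = n - 1 := by rw [← hvval, ← hwval, h]
    omega
  have hwmax : ∀ y : Fin n, y ≤ w := fun y => by
    have := y.isLt
    simp only [Fin.le_def, hwval]
    omega
  -- support sets
  set SC : ℕ → Set (Finset (Fin n)) := fun d => {s | s ∈ Δ ∧ s.card = d} with hSC
  set SCm : ℕ → Set (Finset (Fin (n-3))) := fun d => {s | s ∈ Λ ∧ s.card = d} with hSCm
  set SL : ℕ → Set (Finset (Fin n)) :=
    fun d => {t | t ∈ Δ ∧ t.card = d ∧ ∀ x ∈ t, (x:ℕ) < n-3} with hSL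
  set SD : ℕ → Set (Finset (Fin n)) := fun d => {t | t ∈ Δ ∧ t.card = d ∧ v ∉ t} with hSD
  -- basic facts about the support sets
  have hSLv : ∀ d, ∀ s ∈ SL d, v ∉ s ∧ ∀ y ∈ s, y < v := by
    intro d s hs
    obtain ⟨-, -, hb⟩ := hs
    constructor
    · intro hv
      have := hb v hv
      omega
    · intro y hy
      have := hb y hy
      simp only [Fin.lt_def, hvval]
      omega
  have hSLw : ∀ d, ∀ s ∈ SL d, w ∉ s ∧ ∀ y ∈ s, y < w := by
    intro d s hs
    obtain ⟨-, -, hb⟩ := hs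
    constructor
    · intro hv
      have := hb w hv
      omega
    · intro y hy
      have := hb y hy
      simp only [Fin.lt_def, hwval]
      omega
  have hSLvfree : ∀ d, SL d ⊆ {s : Finset (Fin n) | v ∉ s} := fun d s hs => (hSLv d s hs).1
  -- transport of supports
  have hE : ∀ d, ∀ z : Finset (Fin (n-3)) →₀ K, z ∈ Finsupp.supported K K (SCm d) →
      eMb (K := K) hmn z ∈ Finsupp.supported K K (SL d) := by
    intro d z hz
    refine eMb_supported hmn (fun s hs => ?_) hz
    obtain ⟨hsΛ, hcard⟩ := hs
    refine ⟨face_map hmn hsΛ, by rw [Finset.card_map]; exact hcard, ?_⟩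
    intro x hx
    obtain ⟨y, -, rfl⟩ := Finset.mem_map.mp hx
    simpa using y.isLt
  have hIv : ∀ d, ∀ u : Finset (Fin n) →₀ K, u ∈ Finsupp.supported K K (SL d) →
      iV (K := K) v u ∈ Finsupp.supported K K (SC (d+1)) := by
    intro d u hu
    refine iV_supported (fun s hs => ?_) hu
    obtain ⟨hsΔ, hcard, hb⟩ := hs
    have hvns : v ∉ s := (hSLv d s ⟨hsΔ, hcard, hb⟩).1
    refine ⟨face_insert_big hn hsΔ hb (by rw [hvval]), ?_⟩
    rw [Finset.card_insert_of_notMem hvns, hcard]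
  have hIw : ∀ d, ∀ u : Finset (Fin n) →₀ K, u ∈ Finsupp.supported K K (SL d) →
      iV (K := K) w u ∈ Finsupp.supported K K (SD (d+1)) := by
    intro d u hu
    refine iV_supported (fun s hs => ?_) hu
    obtain ⟨hsΔ, hcard, hb⟩ := hs
    have hwns : w ∉ s := (hSLw d s ⟨hsΔ, hcard, hb⟩).1
    refine ⟨face_insert_last hn hsΔ (fun x hx => by have := hb x hx; omega) hwval, ?_, ?_⟩
    · rw [Finset.card_insert_of_notMem hwns, hcard]
    · intro hvmem
      rcases Finset.mem_insert.mp hvmem with h | h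
      · exact hvw h
      · have := hb v h
        omega
  have hSDC : ∀ d, SD d ⊆ SC d := by
    rintro d s ⟨h1, h2, -⟩
    exact ⟨h1, h2⟩
  have hRv : ∀ d, ∀ u : Finset (Fin n) →₀ K, u ∈ Finsupp.supported K K (SC d) →
      rV (K := K) v u ∈ Finsupp.supported K K (SL (d-1)) := by
    intro d u hu
    refine rV_supported (fun s hs hvs => ?_) hu
    obtain ⟨hsΔ, hcard⟩ := hs
    refine ⟨indepCx_down (Finset.erase_subset v s) hsΔ, ?_, face_bound hn hsΔ hvval hvs⟩
    rw [Finset.card_erase_of_mem hvs, hcard]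
  have hRs : ∀ d, ∀ u : Finset (Fin n) →₀ K, u ∈ Finsupp.supported K K (SL d) →
      eRs (K := K) hm u ∈ Finsupp.supported K K (SCm d) := by
    intro d u hu
    refine eRs_supported hm (fun s hs hb => ?_) hu
    obtain ⟨hsΔ, hcard, -⟩ := hs
    exact ⟨face_image hn hm hsΔ hb, by rw [card_image_pmap hm hb]; exact hcard⟩
  have hSLbound : ∀ d, SL d ⊆ {s : Finset (Fin n) | ∀ x ∈ s, (x:ℕ) < n-3} :=
    fun d s hs => hs.2.2
  -- element-level commutation facts
  have hcomm : ∀ y : Finset (Fin (n-3)) →₀ K,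
      bdry K (eMb (K := K) hmn y) = eMb (K := K) hmn (bdry K y) := by
    intro y
    have h := DFunLike.congr_fun (bdry_eMb (K := K) hmn) y
    simpa using h
  have hrs_emb : ∀ y : Finset (Fin (n-3)) →₀ K, eRs (K := K) hm (eMb (K := K) hmn y) = y := by
    intro y
    have h := DFunLike.congr_fun (eRs_eMb (K := K) hmn hm) y
    simpa using h
  have hdecomp : ∀ u : Finset (Fin n) →₀ K, iV (K := K) v (rV (K := K) v u) + pV (K := K) v u = u := by
    intro u
    have h := DFunLike.congr_fun (iV_rV_pV (K := K) v) u
    simpa using h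
  have hhom : ∀ u : Finset (Fin n) →₀ K,
      bdry K (hW (K := K) w u) + hW (K := K) w (bdry K u) = u := by
    intro u
    have h := DFunLike.congr_fun (hW_homotopy (K := K) hwmax) u
    simpa using h
  have hbd : ∀ u' : Finset (Fin n) →₀ K,
      u' ∈ Finsupp.supported K K {s : Finset (Fin n) | v ∉ s} →
      bdry K u' ∈ Finsupp.supported K K {s : Finset (Fin n) | v ∉ s} := by
    intro u' hu'
    refine bdry_supported (S := {s : Finset (Fin n) | v ∉ s})
      (T := {s : Finset (Fin n) | v ∉ s}) ?_ hu'
    intro s hs y hy hyv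
    exact hs (Finset.mem_of_mem_erase hyv)
  -- the chain map
  set Φ : (Finset (Fin (n-3)) →₀ K) →ₗ[K] (Finset (Fin n) →₀ K) :=
    ((iV (K := K) v) - (iV (K := K) w)).comp (eMb (K := K) hmn) with hΦ
  have hΦ_apply : ∀ z, Φ z = iV (K := K) v (eMb (K := K) hmn z)
      - iV (K := K) w (eMb (K := K) hmn z) := by
    intro z
    simp [hΦ]
  -- obligation 1
  have hZ : ∀ z ∈ degSub K Λ c ⊓ LinearMap.ker (bdry K),
      Φ z ∈ degSub K Δ (c+1) ⊓ LinearMap.ker (bdry K) := by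
    rintro z ⟨hz1, hz2⟩
    rw [degSub_eq] at hz1
    replace hz2 : bdry K z = 0 := hz2
    have hEz := hE c z hz1
    constructor
    · rw [degSub_eq]
      rw [hΦ_apply]
      exact sub_mem (hIv c _ hEz) (Finsupp.supported_mono (hSDC (c+1)) (hIw c _ hEz))
    · show bdry K (Φ z) = 0
      rw [hΦ_apply, map_sub,
        bdry_iV (hSLv c) hEz, bdry_iV (hSLw c) hEz, hcomm, hz2, map_zero, map_zero,
        map_zero]
      abel
  -- obligation 2
  have hB : ∀ z ∈ degSub K Λ c ⊓ LinearMap.ker (bdry K),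
      (Φ z ∈ Submodule.map (bdry K) (degSub K Δ (c+1+1)) ↔
        z ∈ Submodule.map (bdry K) (degSub K Λ (c+1))) := by
    rintro z ⟨hz1, -⟩
    rw [degSub_eq] at hz1
    have hEz := hE c z hz1
    constructor
    · rintro ⟨u, hu, huB⟩
      rw [degSub_eq] at hu
      have hp := hRv (c+2) u hu
      have hp' : rV (K := K) v u ∈ Finsupp.supported K K (SL (c+1)) := by
        simpa using hp
      have hq : pV (K := K) v u ∈ Finsupp.supported K K {s : Finset (Fin n) | v ∉ s} :=
        pV_supported (fun s _ hv => hv) hu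
      have hEzp : eMb (K := K) hmn z = bdry K (rV (K := K) v u) := by
        have happ : rV (K := K) v (bdry K u) = rV (K := K) v (Φ z) := by rw [huB]
        have husplit : bdry K u = bdry K (iV (K := K) v (rV (K := K) v u))
            + bdry K (pV (K := K) v u) := by
          conv_lhs => rw [← hdecomp u]
          rw [map_add]
        rw [husplit, map_add, rV_bdry hq, add_zero,
          bdry_iV (hSLv (c+1)) hp', map_add,
          rV_Dg (Finsupp.supported_mono (hSLvfree (c+1)) hp'),
          rV_iV_same (hbd _ (Finsupp.supported_mono (hSLvfree (c+1)) hp')), zero_add] at happ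
        rw [hΦ_apply, map_sub,
          rV_iV_same (Finsupp.supported_mono (hSLvfree c) hEz),
          rV_iV_ne hvw (Finsupp.supported_mono (hSLvfree c) hEz), sub_zero] at happ
        exact happ.symm
      refine ⟨eRs (K := K) hm (rV (K := K) v u), ?_, ?_⟩
      · rw [degSub_eq]
        exact hRs (c+1) _ hp'
      · rw [← eRs_bdry_on hmn hm (Finsupp.supported_mono (hSLbound (c+1)) hp'),
          ← hEzp, hrs_emb]
    · rintro ⟨y, hy, rfl⟩
      rw [degSub_eq] at hy
      have hEy := hE (c+1) y hy
      refine ⟨iV (K := K) v (eMb (K := K) hmn y) - iV (K := K) w (eMb (K := K) hmn y), ?_, ?_⟩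
      · rw [degSub_eq]
        exact sub_mem (hIv (c+1) _ hEy)
          (Finsupp.supported_mono (hSDC (c+2)) (hIw (c+1) _ hEy))
      · rw [map_sub, bdry_iV (hSLv (c+1)) hEy, bdry_iV (hSLw (c+1)) hEy, hΦ_apply, hcomm]
        abel
  -- obligation 3
  have hS : ∀ ζ ∈ degSub K Δ (c+1) ⊓ LinearMap.ker (bdry K),
      ∃ z ∈ degSub K Λ c ⊓ LinearMap.ker (bdry K),
        ζ - Φ z ∈ Submodule.map (bdry K) (degSub K Δ (c+1+1)) := by
    rintro ζ ⟨hζ1, hζ2⟩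
    rw [degSub_eq] at hζ1
    replace hζ2 : bdry K ζ = 0 := hζ2
    set a : Finset (Fin n) →₀ K := rV (K := K) v ζ with ha
    have haS : a ∈ Finsupp.supported K K (SL c) := by
      have := hRv (c+1) ζ hζ1
      simpa using this
    have havfree : a ∈ Finsupp.supported K K {s : Finset (Fin n) | v ∉ s} :=
      Finsupp.supported_mono (hSLvfree c) haS
    have hbavfree : bdry K a ∈ Finsupp.supported K K {s : Finset (Fin n) | v ∉ s} :=
      hbd _ havfree
    have hcycle_a : bdry K a = 0 := by
      have hq : pV (K := K) v ζ ∈ Finsupp.supported K K {s : Finset (Fin n) | v ∉ s} :=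
        pV_supported (fun s _ hv => hv) hζ1
      have h0 : rV (K := K) v (bdry K ζ) = 0 := by rw [hζ2, map_zero]
      have hζsplit : bdry K ζ = bdry K (iV (K := K) v a) + bdry K (pV (K := K) v ζ) := by
        conv_lhs => rw [← hdecomp ζ]
        rw [map_add]
      rw [hζsplit, map_add, rV_bdry hq, add_zero, bdry_iV (hSLv c) haS, map_add,
        rV_Dg havfree, rV_iV_same hbavfree, zero_add] at h0
      exact h0
    set z : Finset (Fin (n-3)) →₀ K := eRs (K := K) hm a with hz
    have hzS : z ∈ Finsupp.supported K K (SCm c) := hRs c a haS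
    have hzcyc : bdry K z = 0 := by
      rw [hz, ← eRs_bdry_on hmn hm (Finsupp.supported_mono (hSLbound c) haS), hcycle_a,
        map_zero]
    have hEz : eMb (K := K) hmn z = a :=
      eMb_eRs_on hmn hm (Finsupp.supported_mono (hSLbound c) haS)
    have hΦz : Φ z = iV (K := K) v a - iV (K := K) w a := by
      rw [hΦ_apply, hEz]
    set b' : Finset (Fin n) →₀ K := pV (K := K) v ζ + iV (K := K) w a with hb'
    have hb'_eq : ζ - Φ z = b' := by
      rw [hΦz, hb']
      have := hdecomp ζ
      rw [← ha] at this
      calc ζ - (iV (K := K) v a - iV (K := K) w a)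
          = (iV (K := K) v a + pV (K := K) v ζ) - (iV (K := K) v a - iV (K := K) w a) := by
            rw [this]
        _ = pV (K := K) v ζ + iV (K := K) w a := by abel
    have hb'cyc : bdry K b' = 0 := by
      have h1 : bdry K (ζ - Φ z) = 0 := by
        rw [map_sub, hζ2, hΦz, map_sub, bdry_iV (hSLv c) haS, bdry_iV (hSLw c) haS,
          hcycle_a, map_zero, map_zero]
        abel
      rw [← hb'_eq]
      exact h1
    have hb'S : b' ∈ Finsupp.supported K K (SD (c+1)) := by
      refine Submodule.add_mem _ ?_ (hIw c a haS)
      refine pV_supported (fun s hs hv => ?_) hζ1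
      exact ⟨hs.1, hs.2, hv⟩
    have hWb' : hW (K := K) w b' ∈ Finsupp.supported K K (SC (c+2)) := by
      refine hW_supported (fun s hs hws => ?_) hb'S
      obtain ⟨hsΔ, hcard, hvs⟩ := hs
      refine ⟨face_insert_last hn hsΔ (fun x hx hxval => hvs ?_) hwval, ?_⟩
      · have : x = v := Fin.ext (by rw [hxval, hvval])
        rwa [← this]
      · rw [Finset.card_insert_of_notMem hws, hcard]
    have hfinal : bdry K (hW (K := K) w b') = ζ - Φ z := by
      have := hhom b'
      rw [hb'cyc, map_zero, add_zero] at this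
      rw [this, hb'_eq]
    refine ⟨z, ⟨?_, ?_⟩, ?_⟩
    · rw [degSub_eq]
      exact hzS
    · exact hzcyc
    · refine ⟨hW (K := K) w b', ?_, hfinal⟩
      rw [degSub_eq]
      have : (c+1+1) = c+2 := rfl
      rw [this]
      exact hWb'
  exact quot_equiv K (degSub K Λ c ⊓ LinearMap.ker (bdry K))
    (Submodule.map (bdry K) (degSub K Λ (c+1)))
    (degSub K Δ (c+1) ⊓ LinearMap.ker (bdry K))
    (Submodule.map (bdry K) (degSub K Δ (c+1+1))) Φ hZ hB hS

end Key

end HomAux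

open HomAux

open SimpleGraph

/-- For `n ≥ 4` and `i ≥ 1`, the reduced homology of the clique complex
`Δ_n = Δ(P_nᶜ)` of the complement of the path satisfies
`H̃_i(Δ_n; K) ≅ H̃_{i-1}(Δ_{n-3}; K)`. -/
theorem reducedHomology_path_compl_rec (n i : ℕ) (hn : 4 ≤ n) (hi : 1 ≤ i) :
    Nonempty (reducedHomology K (indepCx (pathGraph n)) i ≃ₗ[K]
      reducedHomology K (indepCx (pathGraph (n - 3))) (i - 1)) := by
  obtain ⟨e⟩ := HomAux.key K (n := n) hn i
  refine ⟨?_⟩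
  have h2 : i - 1 + 1 = i := by omega
  show homologyLevel K (indepCx (pathGraph n)) (i+1) ≃ₗ[K]
    homologyLevel K (indepCx (pathGraph (n-3))) (i-1+1)
  rw [h2]
  exact e.symm
end

section
/- dim_K H̃_{k-1}(Δ_{3k}; K) = 1 and dim_K H̃_{k-1}(Δ_{3k-1}; K) = 1, where Δ_n is the clique complex of the complement of the path P_n; consequently β_{k,3k}(J(P_{3k})) = 1 = β_{k,3k-1}(J(P_{3k-1})). -/
open Finset

attribute [local instance] Classical.propDecidable

variable (K : Type) [Field K]

variable {n : ℕ}

open SimpleGraph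

lemma bdry_single (s : Finset (Fin n)) :
    bdry K (Finsupp.single s (1:K)) =
      ∑ v ∈ s, ((-1 : K) ^ (s.filter (· < v)).card) • Finsupp.single (s.erase v) (1 : K) := by
  simp [bdry, Finsupp.lsum_single, LinearMap.toSpanSingleton_apply]

lemma bdry_insert_max (w : Fin n) (s : Finset (Fin n)) (hw : w ∉ s) (hmax : ∀ x ∈ s, x < w) :
    bdry K (Finsupp.single (insert w s) (1:K)) =
      ((-1:K) ^ s.card) • Finsupp.single s (1:K) +
      ∑ v ∈ s, ((-1 : K) ^ (s.filter (· < v)).card) •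
        Finsupp.single (insert w (s.erase v)) (1 : K) := by
  rw [bdry_single, Finset.sum_insert hw]
  congr 1
  · rw [Finset.erase_insert hw]
    congr 2
    rw [Finset.filter_insert]
    rw [if_neg (lt_irrefl w)]
    rw [Finset.filter_true_of_mem hmax]
  · apply Finset.sum_congr rfl
    intro v hv
    rw [Finset.erase_insert_of_ne (hmax v hv).ne']
    congr 2
    rw [Finset.filter_insert, if_neg (fun h => absurd (hmax v hv) (asymm h))]

/-! ### up / down and the two extra vertices -/

def va (n : ℕ) : Fin (n+3) := ⟨n+1, by omega⟩
def vb (n : ℕ) : Fin (n+3) := ⟨n+2, by omega⟩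

def upEmb (n : ℕ) : Fin n ↪ Fin (n+3) :=
  ⟨fun x => ⟨(x:ℕ), by omega⟩, fun a b h => by
    apply Fin.ext
    simpa [Fin.ext_iff] using h⟩

def up (F : Finset (Fin n)) : Finset (Fin (n+3)) := F.map (upEmb n)

noncomputable def down (F : Finset (Fin (n+3))) : Finset (Fin n) :=
  univ.filter (fun x : Fin n => upEmb n x ∈ F)

lemma upEmb_val (x : Fin n) : (upEmb n x : ℕ) = (x : ℕ) := rfl

lemma mem_up {F : Finset (Fin n)} {y : Fin (n+3)} :
    y ∈ up F ↔ ∃ x ∈ F, upEmb n x = y := by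
  simp [up]

lemma mem_up' {F : Finset (Fin n)} {x : Fin n} : upEmb n x ∈ up F ↔ x ∈ F := by
  simp [up]

lemma up_val_lt {F : Finset (Fin n)} {y : Fin (n+3)} (hy : y ∈ up F) : (y:ℕ) < n := by
  obtain ⟨x, -, rfl⟩ := mem_up.1 hy
  simpa [upEmb_val] using x.isLt

lemma up_lt_va {F : Finset (Fin n)} {y : Fin (n+3)} (hy : y ∈ up F) : y < va n := by
  have := up_val_lt hy
  rw [Fin.lt_def]
  show (y:ℕ) < n+1
  omega

lemma up_lt_vb {F : Finset (Fin n)} {y : Fin (n+3)} (hy : y ∈ up F) : y < vb n := by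
  have := up_val_lt hy
  rw [Fin.lt_def]
  show (y:ℕ) < n+2
  omega

lemma va_not_mem_up {F : Finset (Fin n)} : va n ∉ up F := fun h => by
  have := up_val_lt h
  simp only [va] at this
  omega

lemma vb_not_mem_up {F : Finset (Fin n)} : vb n ∉ up F := fun h => by
  have := up_val_lt h
  simp only [vb] at this
  omega

lemma va_ne_vb : va n ≠ vb n := by simp [va, vb, Fin.ext_iff]

lemma card_up (F : Finset (Fin n)) : (up F).card = F.card := Finset.card_map _

lemma up_erase (F : Finset (Fin n)) (v : Fin n) :
    up (F.erase v) = (up F).erase (upEmb n v) := Finset.map_erase _ F v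

lemma filter_up_card (F : Finset (Fin n)) (v : Fin n) :
    ((up F).filter (· < upEmb n v)).card = (F.filter (· < v)).card := by
  rw [up, Finset.filter_map, Finset.card_map]
  congr 1

lemma down_insert_up (H : Finset (Fin n)) : down (insert (va n) (up H)) = H := by
  ext x
  simp only [down, Finset.mem_filter, Finset.mem_univ, true_and, Finset.mem_insert]
  constructor
  · rintro (h | h)
    · exfalso
      have : (upEmb n x : ℕ) = (va n : ℕ) := by rw [h]
      rw [upEmb_val] at this
      simp only [va] at this
      omega
    · exact mem_up'.1 h
  · intro hx
    exact Or.inr (mem_up'.2 hx)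

/-! ### the three maps -/

noncomputable def sigmaMap : ((Finset (Fin n)) →₀ K) →ₗ[K] ((Finset (Fin (n+3))) →₀ K) :=
  Finsupp.lsum K fun F => LinearMap.toSpanSingleton K _
    (Finsupp.single (insert (va n) (up F)) (1:K) - Finsupp.single (insert (vb n) (up F)) (1:K))

noncomputable def piMap : ((Finset (Fin (n+3))) →₀ K) →ₗ[K] ((Finset (Fin n)) →₀ K) :=
  Finsupp.lsum K fun F => LinearMap.toSpanSingleton K _
    (if va n ∈ F ∧ ∀ x ∈ F, x = va n ∨ (x:ℕ) < n then Finsupp.single (down F) (1:K) else 0)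

noncomputable def hMap : ((Finset (Fin (n+3))) →₀ K) →ₗ[K] ((Finset (Fin (n+3))) →₀ K) :=
  Finsupp.lsum K fun F => LinearMap.toSpanSingleton K _
    (if va n ∉ F ∧ vb n ∉ F then ((-1:K) ^ F.card) • Finsupp.single (insert (vb n) F) (1:K)
     else 0)

lemma sigmaMap_single (F : Finset (Fin n)) :
    sigmaMap K (Finsupp.single F (1:K)) =
      Finsupp.single (insert (va n) (up F)) (1:K)
        - Finsupp.single (insert (vb n) (up F)) (1:K) := by
  simp [sigmaMap, Finsupp.lsum_single, LinearMap.toSpanSingleton_apply]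

lemma piMap_single_insert (H : Finset (Fin n)) :
    piMap K (Finsupp.single (insert (va n) (up H)) (1:K)) = Finsupp.single H (1:K) := by
  have hcond : va n ∈ insert (va n) (up H) ∧
      ∀ x ∈ insert (va n) (up H), x = va n ∨ (x:ℕ) < n := by
    refine ⟨Finset.mem_insert_self _ _, ?_⟩
    intro x hx
    rcases Finset.mem_insert.1 hx with h | h
    · exact Or.inl h
    · exact Or.inr (up_val_lt h)
  simp only [piMap, Finsupp.lsum_single, LinearMap.toSpanSingleton_apply, if_pos hcond,
    one_smul, down_insert_up]

lemma piMap_single_of_not_mem (F : Finset (Fin (n+3))) (h : va n ∉ F) :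
    piMap K (Finsupp.single F (1:K)) = 0 := by
  simp only [piMap, Finsupp.lsum_single, LinearMap.toSpanSingleton_apply]
  rw [if_neg (fun hc => h hc.1), smul_zero]

lemma hMap_single (F : Finset (Fin (n+3))) (ha : va n ∉ F) (hb : vb n ∉ F) :
    hMap K (Finsupp.single F (1:K)) =
      ((-1:K) ^ F.card) • Finsupp.single (insert (vb n) F) (1:K) := by
  simp only [hMap, Finsupp.lsum_single, LinearMap.toSpanSingleton_apply, one_smul]
  rw [if_pos (And.intro ha hb)]

lemma hMap_single_of_mem (F : Finset (Fin (n+3))) (h : va n ∈ F ∨ vb n ∈ F) :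
    hMap K (Finsupp.single F (1:K)) = 0 := by
  simp only [hMap, Finsupp.lsum_single, LinearMap.toSpanSingleton_apply]
  rw [if_neg (fun hc => by tauto), smul_zero]

/-! ### L4 : piMap ∘ sigmaMap = id -/

lemma pi_sigma : (piMap K).comp (sigmaMap K (n := n)) = LinearMap.id := by
  apply Finsupp.lhom_ext
  intro F b
  have : (Finsupp.single F b : Finset (Fin n) →₀ K) = b • Finsupp.single F 1 := by
    rw [Finsupp.smul_single, smul_eq_mul, mul_one]
  rw [this, map_smul, map_smul]
  congr 1
  rw [LinearMap.comp_apply, sigmaMap_single, map_sub,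
    piMap_single_insert, piMap_single_of_not_mem _ _ (by
      intro hc
      rcases Finset.mem_insert.1 hc with h | h
      · exact va_ne_vb h
      · exact va_not_mem_up h), sub_zero, LinearMap.id_apply]

/-! ### L1 : bdry ∘ sigmaMap = sigmaMap ∘ bdry -/

lemma bdry_sigma : (bdry K).comp (sigmaMap K (n := n)) = (sigmaMap K).comp (bdry K) := by
  apply Finsupp.lhom_ext
  intro F b
  have hb : (Finsupp.single F b : Finset (Fin n) →₀ K) = b • Finsupp.single F 1 := by
    rw [Finsupp.smul_single, smul_eq_mul, mul_one]
  rw [hb, map_smul, map_smul]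
  congr 1
  rw [LinearMap.comp_apply, LinearMap.comp_apply, sigmaMap_single, map_sub,
    bdry_insert_max _ _ _ va_not_mem_up (fun x hx => up_lt_va hx),
    bdry_insert_max _ _ _ vb_not_mem_up (fun x hx => up_lt_vb hx)]
  rw [bdry_single, map_sum]
  have hrhs : ∀ v ∈ F, sigmaMap K (((-1:K) ^ (F.filter (· < v)).card) •
      Finsupp.single (F.erase v) (1:K)) =
      ((-1:K) ^ (F.filter (· < v)).card) •
        (Finsupp.single (insert (va n) (up (F.erase v))) (1:K)
          - Finsupp.single (insert (vb n) (up (F.erase v))) (1:K)) := by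
    intro v _
    rw [map_smul, sigmaMap_single]
  rw [Finset.sum_congr rfl hrhs]
  have hsum : ∀ w : Fin (n+3),
      (∑ v ∈ up F, ((-1:K) ^ ((up F).filter (· < v)).card) •
        Finsupp.single (insert w ((up F).erase v)) (1:K)) =
      ∑ v ∈ F, ((-1:K) ^ (F.filter (· < v)).card) •
        Finsupp.single (insert w (up (F.erase v))) (1:K) := by
    intro w
    rw [up, Finset.sum_map]
    apply Finset.sum_congr rfl
    intro v _
    rw [show (F.map (upEmb n)) = up F from rfl, filter_up_card, up_erase]
  rw [hsum, hsum]
  rw [sub_add_eq_sub_sub, add_sub_cancel_left, ← Finset.sum_sub_distrib]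
  apply Finset.sum_congr rfl
  intro v _
  rw [← smul_sub]

lemma mem_indep_path {m : ℕ} {F : Finset (Fin m)} :
    F ∈ indepCx (pathGraph m) ↔
      ∀ i ∈ F, ∀ j ∈ F, ¬((i:ℕ)+1 = (j:ℕ) ∨ (j:ℕ)+1 = (i:ℕ)) := by
  simp [indepCx, pathGraph_adj]

lemma face_struct {F : Finset (Fin (n+3))} (hF : F ∈ indepCx (pathGraph (n+3)))
    (ha : va n ∈ F) :
    F = insert (va n) (up (down F)) ∧ down F ∈ indepCx (pathGraph n) := by
  rw [mem_indep_path] at hF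
  have hlt : ∀ x ∈ F, x ≠ va n → (x:ℕ) < n := by
    intro x hx hxa
    have h1 := hF x hx (va n) ha
    have h2 : (va n : ℕ) = n + 1 := rfl
    have h3 : (x:ℕ) < n + 3 := x.isLt
    have h4 : (x:ℕ) ≠ n + 1 := fun h => hxa (Fin.ext (by rw [h, h2]))
    omega
  constructor
  · ext y
    simp only [Finset.mem_insert]
    constructor
    · intro hy
      by_cases hya : y = va n
      · exact Or.inl hya
      · refine Or.inr (mem_up.2 ⟨⟨(y:ℕ), hlt y hy hya⟩, ?_, ?_⟩)
        · simp only [down, Finset.mem_filter, Finset.mem_univ, true_and]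
          have : upEmb n ⟨(y:ℕ), hlt y hy hya⟩ = y := Fin.ext rfl
          rwa [this]
        · exact Fin.ext rfl
    · rintro (rfl | hy)
      · exact ha
      · obtain ⟨x, hx, rfl⟩ := mem_up.1 hy
        simpa [down] using hx
  · rw [mem_indep_path]
    intro i hi j hj
    simp only [down, Finset.mem_filter] at hi hj
    exact hF _ hi.2 _ hj.2

lemma face_insert_va {G : Finset (Fin n)} (hG : G ∈ indepCx (pathGraph n)) :
    insert (va n) (up G) ∈ indepCx (pathGraph (n+3)) := by
  rw [mem_indep_path] at hG ⊢
  intro i hi j hj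
  rcases Finset.mem_insert.1 hi with rfl | hi <;> rcases Finset.mem_insert.1 hj with rfl | hj
  · omega
  · have := up_val_lt hj; have : (j:ℕ) < n := this; show ¬ (n+1+1 = _ ∨ _ + 1 = n+1); omega
  · have := up_val_lt hi; show ¬ (_+1 = n+1 ∨ n+1+1 = _); omega
  · obtain ⟨x, hx, rfl⟩ := mem_up.1 hi
    obtain ⟨y, hy, rfl⟩ := mem_up.1 hj
    exact hG x hx y hy

lemma face_insert_vb {G : Finset (Fin n)} (hG : G ∈ indepCx (pathGraph n)) :
    insert (vb n) (up G) ∈ indepCx (pathGraph (n+3)) := by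
  rw [mem_indep_path] at hG ⊢
  intro i hi j hj
  rcases Finset.mem_insert.1 hi with rfl | hi <;> rcases Finset.mem_insert.1 hj with rfl | hj
  · omega
  · have := up_val_lt hj; show ¬ (n+2+1 = _ ∨ _ + 1 = n+2); omega
  · have := up_val_lt hi; show ¬ (_+1 = n+2 ∨ n+2+1 = _); omega
  · obtain ⟨x, hx, rfl⟩ := mem_up.1 hi
    obtain ⟨y, hy, rfl⟩ := mem_up.1 hj
    exact hG x hx y hy

lemma face_insert_vb' {F : Finset (Fin (n+3))} (hF : F ∈ indepCx (pathGraph (n+3)))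
    (ha : va n ∉ F) (hb : vb n ∉ F) :
    insert (vb n) F ∈ indepCx (pathGraph (n+3)) := by
  rw [mem_indep_path] at hF ⊢
  have hval : ∀ x ∈ F, (x:ℕ) ≠ n + 1 ∧ (x:ℕ) ≠ n + 2 := by
    intro x hx
    constructor
    · exact fun h => ha (by rwa [show x = va n from Fin.ext h] at hx)
    · exact fun h => hb (by rwa [show x = vb n from Fin.ext h] at hx)
  intro i hi j hj
  rcases Finset.mem_insert.1 hi with rfl | hi <;> rcases Finset.mem_insert.1 hj with rfl | hj
  · omega
  · have := hval j hj; have hlt : (j:ℕ) < n + 3 := j.isLt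
    show ¬ (n+2+1 = _ ∨ _ + 1 = n+2); omega
  · have := hval i hi; have hlt : (i:ℕ) < n + 3 := i.isLt
    show ¬ (_+1 = n+2 ∨ n+2+1 = _); omega
  · exact hF i hi j hj

/-! ### L2 : piMap is a chain map on faces -/

lemma pi_bdry {F : Finset (Fin (n+3))} (hF : F ∈ indepCx (pathGraph (n+3))) :
    piMap K (bdry K (Finsupp.single F (1:K))) = bdry K (piMap K (Finsupp.single F (1:K))) := by
  by_cases ha : va n ∈ F
  · obtain ⟨hstr, hG⟩ := face_struct hF ha
    set G := down F with hGdef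
    rw [hstr, piMap_single_insert,
      bdry_insert_max _ _ _ va_not_mem_up (fun x hx => up_lt_va hx), map_add, map_smul,
      piMap_single_of_not_mem _ _ va_not_mem_up, smul_zero, zero_add, map_sum, bdry_single]
    rw [up, Finset.sum_map]
    apply Finset.sum_congr rfl
    intro u hu
    rw [map_smul]
    rw [show (G.map (upEmb n)) = up G from rfl, filter_up_card, ← up_erase,
      piMap_single_insert]
  · rw [piMap_single_of_not_mem _ _ ha, map_zero, bdry_single, map_sum]
    apply Finset.sum_eq_zero
    intro v hv
    rw [map_smul, piMap_single_of_not_mem _ _ (fun h => ha (Finset.mem_of_mem_erase h)),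
      smul_zero]

/-! ### L3 : homotopy identity on faces -/

lemma lt_vb_of_ne {x : Fin (n+3)} (hx : x ≠ vb n) : x < vb n := by
  rw [Fin.lt_def]
  show (x:ℕ) < n+2
  have h1 : (x:ℕ) < n+3 := x.isLt
  have h2 : (x:ℕ) ≠ n+2 := fun h => hx (Fin.ext h)
  omega

lemma homotopy_id {F : Finset (Fin (n+3))} (hF : F ∈ indepCx (pathGraph (n+3))) :
    bdry K (hMap K (Finsupp.single F (1:K))) + hMap K (bdry K (Finsupp.single F (1:K))) =
      Finsupp.single F (1:K) - sigmaMap K (piMap K (Finsupp.single F (1:K))) := by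
  by_cases ha : va n ∈ F
  · -- case (i)
    obtain ⟨hstr, hG⟩ := face_struct hF ha
    set G := down F with hGdef
    rw [hstr, hMap_single_of_mem _ _ (Or.inl (Finset.mem_insert_self _ _)), map_zero, zero_add,
      piMap_single_insert, sigmaMap_single,
      bdry_insert_max _ _ _ va_not_mem_up (fun x hx => up_lt_va hx), map_add, map_smul,
      hMap_single _ _ va_not_mem_up vb_not_mem_up, map_sum]
    have hz : ∀ v ∈ up G, hMap K (((-1:K) ^ ((up G).filter (· < v)).card) •
        Finsupp.single (insert (va n) ((up G).erase v)) (1:K)) = 0 := by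
      intro v _
      rw [map_smul, hMap_single_of_mem _ _ (Or.inl (Finset.mem_insert_self _ _)), smul_zero]
    rw [Finset.sum_eq_zero hz, add_zero, smul_smul, ← mul_pow]
    have hsq : ((-1:K) * (-1:K)) ^ (up G).card = 1 := by norm_num
    rw [hsq, one_smul, sub_sub_cancel]
  · by_cases hb : vb n ∈ F
    · -- case (ii)
      have hFi : F = insert (vb n) (F.erase (vb n)) := (Finset.insert_erase hb).symm
      have hb' : vb n ∉ F.erase (vb n) := Finset.notMem_erase _ _
      have ha' : va n ∉ F.erase (vb n) := fun h => ha (Finset.mem_of_mem_erase h)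
      rw [hMap_single_of_mem _ _ (Or.inr hb), map_zero, zero_add,
        piMap_single_of_not_mem _ _ ha, map_zero, sub_zero]
      conv_lhs => rw [hFi]
      rw [bdry_insert_max _ _ _ hb' (fun x hx => lt_vb_of_ne (Finset.ne_of_mem_erase hx)),
        map_add, map_smul, hMap_single _ _ ha' hb', map_sum]
      have hz : ∀ v ∈ F.erase (vb n),
          hMap K (((-1:K) ^ ((F.erase (vb n)).filter (· < v)).card) •
            Finsupp.single (insert (vb n) ((F.erase (vb n)).erase v)) (1:K)) = 0 := by
        intro v _
        rw [map_smul, hMap_single_of_mem _ _ (Or.inr (Finset.mem_insert_self _ _)), smul_zero]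
      rw [Finset.sum_eq_zero hz, add_zero, smul_smul, ← mul_pow, ← hFi]
      norm_num
    · -- case (iii)
      have hterm : ∀ v ∈ F,
          ((-1:K) ^ F.card) • (((-1:K) ^ (F.filter (· < v)).card) •
              Finsupp.single (insert (vb n) (F.erase v)) (1:K))
            + hMap K (((-1:K) ^ (F.filter (· < v)).card) •
              Finsupp.single (F.erase v) (1:K)) = 0 := by
        intro v hv
        rw [map_smul, hMap_single _ _ (fun h => ha (Finset.mem_of_mem_erase h))
          (fun h => hb (Finset.mem_of_mem_erase h)), Finset.card_erase_of_mem hv,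
          smul_smul, smul_smul, ← add_smul]
        obtain ⟨m, hm⟩ : ∃ m, F.card = m + 1 := by
          have : 0 < F.card := Finset.card_pos.2 ⟨v, hv⟩
          exact ⟨F.card - 1, by omega⟩
        have hcoe : (-1:K) ^ F.card * (-1:K) ^ (F.filter (· < v)).card
            + (-1:K) ^ (F.filter (· < v)).card * (-1:K) ^ (F.card - 1) = 0 := by
          rw [hm]
          simp only [Nat.add_sub_cancel]
          rw [pow_succ]
          ring
        rw [hcoe, zero_smul]
      rw [piMap_single_of_not_mem _ _ ha, map_zero, sub_zero,
        hMap_single _ _ ha hb, map_smul,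
        bdry_insert_max _ _ _ hb (fun x hx => lt_vb_of_ne (fun h => hb (h ▸ hx))),
        bdry_single, map_sum, smul_add, smul_smul, ← mul_pow]
      have hsq : ((-1:K) * (-1:K)) ^ F.card = 1 := by norm_num
      rw [hsq, one_smul, Finset.smul_sum, add_assoc, ← Finset.sum_add_distrib,
        Finset.sum_eq_zero hterm, add_zero]

lemma quot_equiv {M M' : Type} [AddCommGroup M] [Module K M] [AddCommGroup M'] [Module K M']
    (A B : Submodule K M) (A' B' : Submodule K M') (f : M →ₗ[K] M') (g : M' →ₗ[K] M)
    (hfA : ∀ x ∈ A, f x ∈ A') (hfB : ∀ x, x ∈ A → x ∈ B → f x ∈ B')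
    (hgA : ∀ x ∈ A', g x ∈ A) (hgB : ∀ x, x ∈ A' → x ∈ B' → g x ∈ B)
    (hgf : ∀ x ∈ A, g (f x) - x ∈ B) (hfg : ∀ x ∈ A', f (g x) - x ∈ B') :
    Nonempty ((quotMod K A B) ≃ₗ[K] (quotMod K A' B')) := by
  let f' : A →ₗ[K] A' := f.restrict hfA
  let g' : A' →ₗ[K] A := g.restrict hgA
  have hf' : Submodule.comap A.subtype B ≤
      Submodule.comap f' (Submodule.comap A'.subtype B') := by
    intro x hx
    simp only [Submodule.mem_comap, Submodule.subtype_apply] at hx ⊢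
    rw [LinearMap.restrict_apply]
    exact hfB _ x.2 hx
  have hg' : Submodule.comap A'.subtype B' ≤
      Submodule.comap g' (Submodule.comap A.subtype B) := by
    intro x hx
    simp only [Submodule.mem_comap, Submodule.subtype_apply] at hx ⊢
    rw [LinearMap.restrict_apply]
    exact hgB _ x.2 hx
  let F : quotMod K A B →ₗ[K] quotMod K A' B' := Submodule.mapQ _ _ f' hf'
  let G : quotMod K A' B' →ₗ[K] quotMod K A B := Submodule.mapQ _ _ g' hg'
  refine ⟨LinearEquiv.ofLinear F G ?_ ?_⟩
  · apply Submodule.linearMap_qext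
    apply LinearMap.ext
    intro x
    show F (G (Submodule.Quotient.mk x)) = Submodule.Quotient.mk x
    rw [show G (Submodule.Quotient.mk x) = Submodule.Quotient.mk (g' x) from
      Submodule.mapQ_apply _ _ _ _]
    rw [show F (Submodule.Quotient.mk (g' x)) = Submodule.Quotient.mk (f' (g' x)) from
      Submodule.mapQ_apply _ _ _ _]
    apply (Submodule.Quotient.eq _).2
    simp only [Submodule.mem_comap, Submodule.subtype_apply, AddSubgroupClass.coe_sub]
    rw [LinearMap.restrict_apply, LinearMap.restrict_apply]
    exact hfg x x.2
  · apply Submodule.linearMap_qext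
    apply LinearMap.ext
    intro x
    show G (F (Submodule.Quotient.mk x)) = Submodule.Quotient.mk x
    rw [show F (Submodule.Quotient.mk x) = Submodule.Quotient.mk (f' x) from
      Submodule.mapQ_apply _ _ _ _]
    rw [show G (Submodule.Quotient.mk (f' x)) = Submodule.Quotient.mk (g' (f' x)) from
      Submodule.mapQ_apply _ _ _ _]
    apply (Submodule.Quotient.eq _).2
    simp only [Submodule.mem_comap, Submodule.subtype_apply, AddSubgroupClass.coe_sub]
    rw [LinearMap.restrict_apply, LinearMap.restrict_apply]
    exact hgf x x.2

/-! ### maps respect degSub -/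

lemma sigma_degSub {c : ℕ} {x : (Finset (Fin n)) →₀ K}
    (hx : x ∈ degSub K (indepCx (pathGraph n)) c) :
    sigmaMap K x ∈ degSub K (indepCx (pathGraph (n+3))) (c+1) := by
  induction hx using Submodule.span_induction with
  | mem x h =>
    obtain ⟨s, hs, hcard, rfl⟩ := h
    rw [sigmaMap_single]
    apply sub_mem
    · apply Submodule.subset_span
      exact ⟨_, face_insert_va hs, by
        rw [Finset.card_insert_of_notMem va_not_mem_up, card_up, hcard], rfl⟩
    · apply Submodule.subset_span
      exact ⟨_, face_insert_vb hs, by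
        rw [Finset.card_insert_of_notMem vb_not_mem_up, card_up, hcard], rfl⟩
  | zero => rw [map_zero]; exact Submodule.zero_mem _
  | add x y hx hy ihx ihy => rw [map_add]; exact Submodule.add_mem _ ihx ihy
  | smul a x hx ihx => rw [map_smul]; exact Submodule.smul_mem _ _ ihx

lemma pi_degSub {c : ℕ} {x : (Finset (Fin (n+3))) →₀ K}
    (hx : x ∈ degSub K (indepCx (pathGraph (n+3))) (c+1)) :
    piMap K x ∈ degSub K (indepCx (pathGraph n)) c := by
  induction hx using Submodule.span_induction with
  | mem x h =>
    obtain ⟨s, hs, hcard, rfl⟩ := h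
    by_cases ha : va n ∈ s
    · obtain ⟨hstr, hG⟩ := face_struct hs ha
      have hins := piMap_single_insert K (down s)
      rw [← hstr] at hins
      rw [hins]
      apply Submodule.subset_span
      refine ⟨_, hG, ?_, rfl⟩
      have hc2 : s.card = (down s).card + 1 := by
        conv_lhs => rw [hstr]
        rw [Finset.card_insert_of_notMem va_not_mem_up, card_up]
      omega
    · rw [piMap_single_of_not_mem _ _ ha]
      exact Submodule.zero_mem _
  | zero => rw [map_zero]; exact Submodule.zero_mem _
  | add x y hx hy ihx ihy => rw [map_add]; exact Submodule.add_mem _ ihx ihy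
  | smul a x hx ihx => rw [map_smul]; exact Submodule.smul_mem _ _ ihx

lemma h_degSub {c : ℕ} {x : (Finset (Fin (n+3))) →₀ K}
    (hx : x ∈ degSub K (indepCx (pathGraph (n+3))) c) :
    hMap K x ∈ degSub K (indepCx (pathGraph (n+3))) (c+1) := by
  induction hx using Submodule.span_induction with
  | mem x h =>
    obtain ⟨s, hs, hcard, rfl⟩ := h
    by_cases ha : va n ∈ s
    · rw [hMap_single_of_mem _ _ (Or.inl ha)]; exact Submodule.zero_mem _
    · by_cases hb : vb n ∈ s
      · rw [hMap_single_of_mem _ _ (Or.inr hb)]; exact Submodule.zero_mem _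
      · rw [hMap_single _ _ ha hb]
        apply Submodule.smul_mem
        apply Submodule.subset_span
        exact ⟨_, face_insert_vb' hs ha hb, by
          rw [Finset.card_insert_of_notMem hb, hcard], rfl⟩
  | zero => rw [map_zero]; exact Submodule.zero_mem _
  | add x y hx hy ihx ihy => rw [map_add]; exact Submodule.add_mem _ ihx ihy
  | smul a x hx ihx => rw [map_smul]; exact Submodule.smul_mem _ _ ihx

lemma pi_bdry_on {c : ℕ} {x : (Finset (Fin (n+3))) →₀ K}
    (hx : x ∈ degSub K (indepCx (pathGraph (n+3))) c) :
    piMap K (bdry K x) = bdry K (piMap K x) := by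
  induction hx using Submodule.span_induction with
  | mem x h =>
    obtain ⟨s, hs, hcard, rfl⟩ := h
    exact pi_bdry K hs
  | zero => simp
  | add x y hx hy ihx ihy => rw [map_add, map_add, map_add, map_add, ihx, ihy]
  | smul a x hx ihx => rw [map_smul, map_smul, map_smul, map_smul, ihx]

lemma homotopy_on {c : ℕ} {x : (Finset (Fin (n+3))) →₀ K}
    (hx : x ∈ degSub K (indepCx (pathGraph (n+3))) c) :
    bdry K (hMap K x) + hMap K (bdry K x) = x - sigmaMap K (piMap K x) := by
  induction hx using Submodule.span_induction with
  | mem x h =>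
    obtain ⟨s, hs, hcard, rfl⟩ := h
    exact homotopy_id K hs
  | zero => simp
  | add x y hx hy ihx ihy =>
    simp only [map_add]
    rw [add_add_add_comm, ihx, ihy]
    abel
  | smul a x hx ihx =>
    simp only [map_smul, ← smul_add, ihx, smul_sub]
lemma homology_step (c : ℕ) :
    Module.finrank K (homologyLevel K (indepCx (pathGraph (n+3))) (c+1)) =
      Module.finrank K (homologyLevel K (indepCx (pathGraph n)) c) := by
  have hσ : ∀ x : (Finset (Fin n)) →₀ K, bdry K (sigmaMap K x) = sigmaMap K (bdry K x) := by
    intro x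
    exact LinearMap.congr_fun (bdry_sigma K) x
  have hπσ : ∀ x : (Finset (Fin n)) →₀ K, piMap K (sigmaMap K x) = x := by
    intro x
    exact LinearMap.congr_fun (pi_sigma K) x
  obtain ⟨e⟩ := quot_equiv K
    (degSub K (indepCx (pathGraph n)) c ⊓ LinearMap.ker (bdry K))
    (Submodule.map (bdry K) (degSub K (indepCx (pathGraph n)) (c + 1)))
    (degSub K (indepCx (pathGraph (n+3))) (c+1) ⊓ LinearMap.ker (bdry K))
    (Submodule.map (bdry K) (degSub K (indepCx (pathGraph (n+3))) (c + 2)))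
    (sigmaMap K) (piMap K)
    (fun x hx => Submodule.mem_inf.2 ⟨sigma_degSub K hx.1, LinearMap.mem_ker.2 (by
      rw [hσ, LinearMap.mem_ker.1 hx.2, map_zero])⟩)
    (fun x _ hxB => by
      obtain ⟨y, hy, rfl⟩ := hxB
      exact ⟨sigmaMap K y, sigma_degSub K hy, hσ y⟩)
    (fun x hx => Submodule.mem_inf.2 ⟨pi_degSub K hx.1, LinearMap.mem_ker.2 (by
      rw [← pi_bdry_on K hx.1, LinearMap.mem_ker.1 hx.2, map_zero])⟩)
    (fun x _ hxB => by
      obtain ⟨y, hy, rfl⟩ := hxB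
      exact ⟨piMap K y, pi_degSub K hy, (pi_bdry_on K hy).symm⟩)
    (fun x _ => by rw [hπσ, sub_self]; exact Submodule.zero_mem _)
    (fun x hx => by
      have hh := homotopy_on K hx.1
      rw [LinearMap.mem_ker.1 hx.2, map_zero, add_zero] at hh
      have : sigmaMap K (piMap K x) - x = bdry K (-(hMap K x)) := by
        rw [map_neg, hh]
        abel
      rw [this]
      exact ⟨-(hMap K x), Submodule.neg_mem _ (h_degSub K hx.1), rfl⟩)
  exact (LinearEquiv.finrank_eq e).symm

/-! ### base cases -/

lemma empty_mem_indepCx {m : ℕ} (G : SimpleGraph (Fin m)) : ∅ ∈ indepCx G := by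
  simp [indepCx]

lemma finrank_quotMod_of_bot {M : Type} [AddCommGroup M] [Module K M] (A B : Submodule K M)
    (hB : B = ⊥) : Module.finrank K (quotMod K A B) = Module.finrank K A := by
  have : Submodule.comap A.subtype B = ⊥ := by
    rw [hB, Submodule.comap_bot, Submodule.ker_subtype]
  exact LinearEquiv.finrank_eq (Submodule.quotEquivOfEqBot _ this)

lemma base0 : Module.finrank K (homologyLevel K (indepCx (pathGraph 0)) 0) = 1 := by
  have hB : degSub K (indepCx (pathGraph 0)) 1 = ⊥ := by
    unfold degSub
    convert Submodule.span_empty (M := (Finset (Fin 0)) →₀ K) (R := K)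
    ext x
    simp only [Set.mem_setOf_eq, Set.mem_empty_iff_false, iff_false, not_exists]
    intro s
    rintro ⟨-, hcard, -⟩
    obtain ⟨a, -⟩ := Finset.card_eq_one.1 hcard
    exact a.elim0
  have hA : degSub K (indepCx (pathGraph 0)) 0 ⊓ LinearMap.ker (bdry K) =
      Submodule.span K {Finsupp.single (∅ : Finset (Fin 0)) (1:K)} := by
    have hd : degSub K (indepCx (pathGraph 0)) 0 =
        Submodule.span K {Finsupp.single (∅ : Finset (Fin 0)) (1:K)} := by
      unfold degSub
      congr 1
      ext x
      simp only [Set.mem_setOf_eq, Set.mem_singleton_iff]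
      constructor
      · rintro ⟨s, -, -, rfl⟩
        congr 1
        exact Finset.eq_empty_of_isEmpty s
      · rintro rfl
        exact ⟨∅, empty_mem_indepCx _, Finset.card_empty, rfl⟩
    rw [hd]
    apply inf_eq_left.2
    rw [Submodule.span_le]
    rintro x rfl
    rw [SetLike.mem_coe, LinearMap.mem_ker, bdry_single, Finset.sum_empty]
  show Module.finrank K (quotMod K _ _) = 1
  rw [finrank_quotMod_of_bot K _ _ (by rw [hB, Submodule.map_bot]), hA]
  apply finrank_span_singleton
  intro hcon
  have := DFunLike.congr_fun hcon ∅
  simp at this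

lemma base2 : Module.finrank K (homologyLevel K (indepCx (pathGraph 2)) 1) = 1 := by
  set e0 : (Finset (Fin 2)) →₀ K := Finsupp.single {0} 1 with he0
  set e1 : (Finset (Fin 2)) →₀ K := Finsupp.single {1} 1 with he1
  have h0mem : ({0} : Finset (Fin 2)) ∈ indepCx (pathGraph 2) := by
    rw [mem_indep_path]
    intro i hi j hj
    rw [Finset.mem_singleton] at hi hj
    subst hi; subst hj
    simp
  have h1mem : ({1} : Finset (Fin 2)) ∈ indepCx (pathGraph 2) := by
    rw [mem_indep_path]
    intro i hi j hj
    rw [Finset.mem_singleton] at hi hj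
    subst hi; subst hj
    simp
  have hB : degSub K (indepCx (pathGraph 2)) 2 = ⊥ := by
    unfold degSub
    convert Submodule.span_empty (M := (Finset (Fin 2)) →₀ K) (R := K)
    ext x
    simp only [Set.mem_setOf_eq, Set.mem_empty_iff_false, iff_false, not_exists]
    rintro s ⟨hs, hcard, -⟩
    have huniv : s = Finset.univ := Finset.eq_univ_of_card s (by simpa using hcard)
    rw [mem_indep_path] at hs
    have := hs 0 (huniv ▸ Finset.mem_univ 0) 1 (huniv ▸ Finset.mem_univ 1)
    simp at this
  have hbd0 : bdry K e0 = Finsupp.single ∅ 1 := by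
    rw [he0, bdry_single, Finset.sum_singleton]
    have : ({0} : Finset (Fin 2)).filter (· < 0) = ∅ := by decide
    rw [this]
    simp
  have hbd1 : bdry K e1 = Finsupp.single ∅ 1 := by
    rw [he1, bdry_single, Finset.sum_singleton]
    have : ({1} : Finset (Fin 2)).filter (· < 1) = ∅ := by decide
    rw [this]
    simp
  have hA : degSub K (indepCx (pathGraph 2)) 1 ⊓ LinearMap.ker (bdry K) =
      Submodule.span K {e0 - e1} := by
    have hd : degSub K (indepCx (pathGraph 2)) 1 = Submodule.span K {e0, e1} := by
      unfold degSub
      congr 1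
      ext x
      simp only [Set.mem_setOf_eq, Set.mem_insert_iff, Set.mem_singleton_iff]
      constructor
      · rintro ⟨s, hs, hcard, rfl⟩
        obtain ⟨a, rfl⟩ := Finset.card_eq_one.1 hcard
        fin_cases a
        · exact Or.inl rfl
        · exact Or.inr rfl
      · rintro (rfl | rfl)
        · exact ⟨{0}, h0mem, rfl, rfl⟩
        · exact ⟨{1}, h1mem, rfl, rfl⟩
    apply le_antisymm
    · rintro x ⟨hx1, hx2⟩
      rw [hd] at hx1
      obtain ⟨a, b, rfl⟩ := Submodule.mem_span_pair.1 hx1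
      have hker : bdry K (a • e0 + b • e1) = 0 := hx2
      rw [map_add, map_smul, map_smul, hbd0, hbd1, ← add_smul] at hker
      have hab : a + b = 0 := by
        have := DFunLike.congr_fun hker ∅
        simpa using this
      have hbeq : b = -a := eq_neg_of_add_eq_zero_left (by rw [add_comm]; exact hab)
      subst hbeq
      apply Submodule.mem_span_singleton.2
      exact ⟨a, by rw [smul_sub]; module⟩
    · rw [Submodule.span_le]
      rintro x rfl
      refine SetLike.mem_coe.2 ⟨?_, ?_⟩
      · rw [hd]
        exact sub_mem (Submodule.subset_span (Or.inl rfl))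
          (Submodule.subset_span (Or.inr rfl))
      · exact SetLike.mem_coe.2 (LinearMap.mem_ker.2 (by rw [map_sub, hbd0, hbd1, sub_self]))
  show Module.finrank K (quotMod K _ _) = 1
  rw [finrank_quotMod_of_bot K _ _ (by rw [hB, Submodule.map_bot]), hA]
  apply finrank_span_singleton
  intro hcon
  have := DFunLike.congr_fun hcon {0}
  rw [he0, he1] at this
  simp only [Finsupp.coe_sub, Pi.sub_apply, Finsupp.single_eq_same, Finsupp.coe_zero,
    Pi.zero_apply] at this
  rw [Finsupp.single_apply, if_neg (by decide)] at this
  simp at this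

/-! ### chains -/

lemma rank_3k (k : ℕ) :
    Module.finrank K (homologyLevel K (indepCx (pathGraph (3 * k))) k) = 1 := by
  induction k with
  | zero => exact base0 K
  | succ k ih =>
    rw [show 3 * (k+1) = (3*k) + 3 from by ring]
    rw [homology_step K k]
    exact ih

lemma rank_3k2 (k : ℕ) :
    Module.finrank K (homologyLevel K (indepCx (pathGraph (3 * k + 2))) (k + 1)) = 1 := by
  induction k with
  | zero => exact base2 K
  | succ k ih =>
    rw [show 3 * (k+1) + 2 = (3*k+2) + 3 from by ring]
    rw [homology_step K (k+1)]
    exact ih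

lemma coverBetti_top {m : ℕ} (G : SimpleGraph (Fin m)) (i : ℕ) :
    coverBetti K G i m = Module.finrank K (homologyLevel K (indepCx G) i) := by
  unfold coverBetti
  have hfilter : (indepCx G).filter (fun F => F.card + m = m) = {∅} := by
    ext F
    simp only [Finset.mem_filter, Finset.mem_singleton]
    constructor
    · rintro ⟨-, hc⟩
      exact Finset.card_eq_zero.1 (by omega)
    · rintro rfl
      exact ⟨empty_mem_indepCx _, by simp⟩
  have hlink : linkCx (indepCx G) ∅ = indepCx G := by
    ext s
    simp only [linkCx, indepCx, Finset.mem_filter, Finset.mem_powerset, Finset.subset_univ,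
      true_and, Finset.disjoint_empty_right, Finset.union_empty]
  rw [hfilter, Finset.sum_singleton, hlink]

/-- `dim_K H̃_{k-1}(Δ_{3k}; K) = 1` and `dim_K H̃_{k-1}(Δ_{3k-1}; K) = 1` for the clique
complexes of complements of paths; consequently
`β_{k,3k}(J(P_{3k})) = 1 = β_{k,3k-1}(J(P_{3k-1}))`. -/
theorem path_compl_reducedHomology_dim (k : ℕ) (hk : 1 ≤ k) :
    Module.finrank K (reducedHomology K (indepCx (pathGraph (3 * k))) (k - 1)) = 1 ∧
      Module.finrank K (reducedHomology K (indepCx (pathGraph (3 * k - 1))) (k - 1)) = 1 ∧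
      coverBetti K (pathGraph (3 * k)) k (3 * k) = 1 ∧
      coverBetti K (pathGraph (3 * k - 1)) k (3 * k - 1) = 1 := by
  obtain ⟨j, rfl⟩ : ∃ j, k = j + 1 := ⟨k - 1, by omega⟩
  have e1 : 3 * (j + 1) - 1 = 3 * j + 2 := by omega
  have e2 : j + 1 - 1 = j := by omega
  refine ⟨?_, ?_, ?_, ?_⟩
  · show Module.finrank K (homologyLevel K (indepCx (pathGraph (3*(j+1)))) ((j+1-1)+1)) = 1
    rw [e2]
    exact rank_3k K (j+1)
  · show Module.finrank K
      (homologyLevel K (indepCx (pathGraph (3*(j+1)-1))) ((j+1-1)+1)) = 1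
    rw [e1, e2]
    exact rank_3k2 K j
  · rw [coverBetti_top]
    exact rank_3k K (j+1)
  · rw [e1, coverBetti_top]
    exact rank_3k2 K j
end
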